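/- arXiv:1510.08018 — 4 statements merged into one kernel-verified Lean document; each statement's English description precedes it below -/
import Mathlib

section
/- (Geometric mean decomposition) Let A be a real M×N matrix with M ≤ N and rank M. Then there exist an M×M orthogonal matrix U, an N×N orthogonal matrix V, and a real M×N generalized lower-triangular matrix T such that A = U * T * Vᵀ and all diagonal entries of T are equal to the same positive real number d satisfying d^(2M) = det(A * Aᵀ). -/
open Matrix BigOperators RealInnerProductSpace

namespace GMD


/-- Extend a square matrix by a leading `1` block. -/
def ext1 {n : ℕ} (P : Matrix (Fin n) (Fin n) ℝ) : Matrix (Fin (n+1)) (Fin (n+1)) ℝ :=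
  Matrix.of (Fin.cons (Fin.cons 1 0) (fun i => Fin.cons 0 (P i)))

@[simp] lemma ext1_zz {n : ℕ} (P : Matrix (Fin n) (Fin n) ℝ) : ext1 P 0 0 = 1 := rfl
@[simp] lemma ext1_zs {n : ℕ} (P : Matrix (Fin n) (Fin n) ℝ) (j : Fin n) :
    ext1 P 0 j.succ = 0 := rfl
@[simp] lemma ext1_sz {n : ℕ} (P : Matrix (Fin n) (Fin n) ℝ) (i : Fin n) :
    ext1 P i.succ 0 = 0 := by simp [ext1]
@[simp] lemma ext1_ss {n : ℕ} (P : Matrix (Fin n) (Fin n) ℝ) (i j : Fin n) :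
    ext1 P i.succ j.succ = P i j := by simp [ext1]

lemma ext1_transpose {n : ℕ} (P : Matrix (Fin n) (Fin n) ℝ) : (ext1 P)ᵀ = ext1 Pᵀ := by
  ext i j
  induction i using Fin.cases <;> induction j using Fin.cases <;> simp

lemma ext1_mul {n : ℕ} (P Q : Matrix (Fin n) (Fin n) ℝ) : ext1 P * ext1 Q = ext1 (P * Q) := by
  ext i j
  induction i using Fin.cases <;> induction j using Fin.cases <;>
    simp [mul_apply, Fin.sum_univ_succ]

lemma ext1_one {n : ℕ} : ext1 (1 : Matrix (Fin n) (Fin n) ℝ) = 1 := by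
  ext i j
  induction i using Fin.cases <;> induction j using Fin.cases <;>
    simp [one_apply, Fin.succ_ne_zero, (Fin.succ_ne_zero _).symm, Fin.succ_inj]

lemma dot_self_nonneg {m : ℕ} (v : Fin m → ℝ) : 0 ≤ v ⬝ᵥ v :=
  Finset.sum_nonneg fun i _ => mul_self_nonneg _

lemma dot_mul_self {m : ℕ} (B : Matrix (Fin m) (Fin m) ℝ) (x : Fin m → ℝ) :
    (Bᵀ *ᵥ x) ⬝ᵥ (Bᵀ *ᵥ x) = x ⬝ᵥ ((B * Bᵀ) *ᵥ x) := by
  calc (Bᵀ *ᵥ x) ⬝ᵥ (Bᵀ *ᵥ x) = (x ᵥ* B) ⬝ᵥ (Bᵀ *ᵥ x) := by rw [mulVec_transpose]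
    _ = x ⬝ᵥ (B *ᵥ (Bᵀ *ᵥ x)) := (dotProduct_mulVec _ _ _).symm
    _ = x ⬝ᵥ ((B * Bᵀ) *ᵥ x) := by rw [mulVec_mulVec]

/-- Householder: an orthogonal matrix whose first column is a prescribed unit vector. -/
lemma householder {m : ℕ} (u : Fin (m+1) → ℝ) (hu : u ⬝ᵥ u = 1) :
    ∃ P : Matrix (Fin (m+1)) (Fin (m+1)) ℝ, P * Pᵀ = 1 ∧ ∀ i, P i 0 = u i := by
  by_cases hsp : u = Pi.single 0 1
  · refine ⟨1, by simp, fun i => ?_⟩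
    simp [hsp, one_apply, Pi.single_apply]
  · set e : Fin (m+1) → ℝ := Pi.single 0 1 with he
    set w : Fin (m+1) → ℝ := u - e with hwdef
    have hwne : w ≠ 0 := by
      intro h0
      exact hsp (by rwa [sub_eq_zero] at h0)
    set c : ℝ := w ⬝ᵥ w with hc
    have hcpos : 0 < c := by
      rcases (dot_self_nonneg w).eq_or_lt with h | h
      · exact absurd (dotProduct_self_eq_zero.mp h.symm) hwne
      · exact h
    have hcne : c ≠ 0 := ne_of_gt hcpos
    have hw0 : c = -2 * w 0 := by
      have h1 : u ⬝ᵥ e = u 0 := by simp [he, dotProduct_single]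
      have h2 : e ⬝ᵥ u = u 0 := by simp [he, single_dotProduct]
      have h3 : e ⬝ᵥ e = 1 := by simp [he, single_dotProduct, Pi.single_apply]
      have h0 : w 0 = u 0 - 1 := by simp [hwdef, he]
      rw [h0, hc, hwdef, sub_dotProduct, dotProduct_sub, dotProduct_sub, hu, h1, h2, h3]
      ring
    have hw0ne : w 0 ≠ 0 := by
      intro h
      rw [h] at hw0; rw [hw0] at hcpos; simp at hcpos
    set W : Matrix (Fin (m+1)) (Fin (m+1)) ℝ := vecMulVec w w with hW
    have hWsym : Wᵀ = W := by
      ext i j; simp [hW, vecMulVec_apply, mul_comm]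
    have hWW : W * W = c • W := by
      ext i j
      rw [mul_apply]
      simp only [hW, vecMulVec_apply, Matrix.smul_apply, smul_eq_mul, hc, dotProduct,
        Finset.sum_mul]
      exact Finset.sum_congr rfl fun k _ => by ring
    refine ⟨1 - (2/c) • W, ?_, ?_⟩
    · have ht : (1 - (2/c) • W)ᵀ = 1 - (2/c) • W := by
        rw [transpose_sub, transpose_smul, transpose_one, hWsym]
      rw [ht]
      have hcoef : (2/c) * (2/c) * c = 2/c + 2/c := by field_simp; ring
      calc (1 - (2/c) • W) * (1 - (2/c) • W)
          = 1 - (2/c) • W - ((2/c) • W - (2/c) • (W * (2/c) • W)) := by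
            rw [sub_mul, mul_sub, mul_sub, one_mul, mul_one, smul_mul_assoc, Matrix.one_mul]
        _ = 1 := by
            rw [Matrix.mul_smul, hWW, smul_smul, smul_smul, hcoef, add_smul]
            abel
    · intro i
      have h2cw0 : (2/c) * w 0 = -1 := by
        rw [hw0]; field_simp
      have : (1 - (2/c) • W) i 0 = (if i = 0 then (1:ℝ) else 0) - (2/c) * (w i * w 0) := by
        simp [hW, vecMulVec_apply, one_apply, Matrix.sub_apply]
      rw [this]
      have : (2/c) * (w i * w 0) = -w i := by
        rw [show (2/c) * (w i * w 0) = ((2/c) * w 0) * w i by ring, h2cw0]; ring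
      rw [this]
      have : w i = u i - e i := by simp [hwdef]
      rw [this, he]
      simp [Pi.single_apply]
      try split <;> ring


/-- There is a unit vector `u` with `‖Bᵀ u‖² = d²` whenever `d^m = |det B|`. -/
lemma exists_unit {m : ℕ} (B : Matrix (Fin (m+1)) (Fin (m+1)) ℝ) (d : ℝ) (hd : 0 < d)
    (hdet : d ^ (m+1) = |B.det|) :
    ∃ u : Fin (m+1) → ℝ, u ⬝ᵥ u = 1 ∧ (Bᵀ *ᵥ u) ⬝ᵥ (Bᵀ *ᵥ u) = d ^ 2 := by
  have hG : (B * Bᵀ).IsHermitian := by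
    have := isHermitian_mul_conjTranspose_self B
    rwa [conjTranspose_eq_transpose_of_trivial] at this
  set G := B * Bᵀ with hGdef
  set lam := hG.eigenvalues with hlam
  set φ : Fin (m+1) → (Fin (m+1) → ℝ) := fun k => ⇑(hG.eigenvectorBasis k) with hφ
  have hdot : ∀ k l, (φ k) ⬝ᵥ (φ l) = if k = l then 1 else 0 := by
    intro k l
    have h := orthonormal_iff_ite.mp hG.eigenvectorBasis.orthonormal k l
    rw [← h]
    simp [PiLp.inner_apply, RCLike.inner_apply, dotProduct, hφ]
    exact Finset.sum_congr rfl fun _ _ => mul_comm _ _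
  have hmul : ∀ k, G *ᵥ (φ k) = lam k • (φ k) := fun k => hG.mulVec_eigenvectorBasis k
  have hlamval : ∀ k, (φ k) ⬝ᵥ (G *ᵥ (φ k)) = lam k := by
    intro k
    rw [hmul k, dotProduct_smul, hdot k k]
    simp
  have hlamnn : ∀ k, 0 ≤ lam k := by
    intro k
    rw [← hlamval k, ← dot_mul_self]
    exact dot_self_nonneg _
  have hdetG : G.det = ∏ k, lam k := by
    simpa using hG.det_eq_prod_eigenvalues
  have hdetB : G.det = (d ^ 2) ^ (m+1) := by
    have h1 : (d ^ 2) ^ (m+1) = (d ^ (m+1)) ^ 2 := by ring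
    rw [hGdef, det_mul, det_transpose, h1, hdet, sq_abs, sq]
  have hprod : ∏ k, lam k = (d ^ 2) ^ (m+1) := by rw [← hdetG, hdetB]
  have hd2 : (0:ℝ) < d ^ 2 := by positivity
  have hlampos : ∀ k, 0 < lam k := by
    intro k
    rcases (hlamnn k).eq_or_lt with h | h
    · exfalso
      have : ∏ k, lam k = 0 := Finset.prod_eq_zero (Finset.mem_univ k) h.symm
      rw [hprod] at this
      exact absurd this (by positivity)
    · exact h
  have hlow : ∃ k, lam k ≤ d ^ 2 := by
    by_contra hcon
    push_neg at hcon
    have := Finset.prod_lt_prod_of_nonempty (s := Finset.univ)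
      (f := fun _ : Fin (m+1) => d ^ 2) (g := lam) (fun i _ => hd2) (fun i _ => hcon i)
      Finset.univ_nonempty
    rw [Finset.prod_const, hprod, Finset.card_univ, Fintype.card_fin] at this
    exact lt_irrefl _ this
  have hhigh : ∃ k, d ^ 2 ≤ lam k := by
    by_contra hcon
    push_neg at hcon
    have := Finset.prod_lt_prod_of_nonempty (s := Finset.univ)
      (f := lam) (g := fun _ : Fin (m+1) => d ^ 2) (fun i _ => hlampos i) (fun i _ => hcon i)
      Finset.univ_nonempty
    rw [Finset.prod_const, hprod, Finset.card_univ, Fintype.card_fin] at this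
    exact lt_irrefl _ this
  obtain ⟨k, hk⟩ := hlow
  obtain ⟨l, hl⟩ := hhigh
  rcases eq_or_lt_of_le hk with heq | hklt
  · refine ⟨φ k, by simpa using hdot k k, ?_⟩
    rw [dot_mul_self, hlamval k, heq]
  · have hlt : lam k < lam l := lt_of_lt_of_le hklt hl
    have hkl : k ≠ l := fun h => by rw [h] at hlt; exact lt_irrefl _ hlt
    have hdenpos : (0:ℝ) < lam l - lam k := sub_pos.mpr hlt
    set s : ℝ := (lam l - d ^ 2) / (lam l - lam k) with hs
    have hs0 : 0 ≤ s := div_nonneg (by linarith) (le_of_lt hdenpos)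
    have hs1 : s ≤ 1 := by
      rw [hs, div_le_one hdenpos]; linarith
    set α := Real.sqrt s with hα
    set β := Real.sqrt (1 - s) with hβ
    have hα2 : α * α = s := Real.mul_self_sqrt hs0
    have hβ2 : β * β = 1 - s := Real.mul_self_sqrt (by linarith)
    have key : s * lam k + (1 - s) * lam l = d ^ 2 := by
      rw [hs]; field_simp; ring
    refine ⟨α • φ k + β • φ l, ?_, ?_⟩
    · simp only [dotProduct_add, add_dotProduct, dotProduct_smul, smul_dotProduct,
        smul_eq_mul, hdot, eq_self_iff_true, if_true, if_neg hkl, if_neg (Ne.symm hkl)]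
      linear_combination hα2 + hβ2
    · rw [dot_mul_self, mulVec_add, mulVec_smul, mulVec_smul, hmul, hmul]
      simp only [dotProduct_add, add_dotProduct, dotProduct_smul, smul_dotProduct,
        smul_eq_mul, hdot, eq_self_iff_true, if_true, if_neg hkl, if_neg (Ne.symm hkl)]
      linear_combination lam k * hα2 + lam l * hβ2 + key




lemma abs_det_orth {m : ℕ} {P : Matrix (Fin m) (Fin m) ℝ} (h : P * Pᵀ = 1) : |P.det| = 1 := by
  have h1 : P.det * P.det = 1 := by
    have := congrArg Matrix.det h
    rwa [det_mul, det_transpose, det_one] at this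
  rcases mul_self_eq_one_iff.mp h1 with h2 | h2 <;> rw [h2] <;> norm_num

lemma orth_mul {m : ℕ} {P Q : Matrix (Fin m) (Fin m) ℝ} (hP : P * Pᵀ = 1) (hQ : Q * Qᵀ = 1) :
    (P * Q) * (P * Q)ᵀ = 1 := by
  rw [transpose_mul, Matrix.mul_assoc, ← Matrix.mul_assoc Q, hQ, Matrix.one_mul, hP]

lemma sandwich {m : ℕ} (U W B : Matrix (Fin m) (Fin m) ℝ) (hU : U * Uᵀ = 1) (hW : W * Wᵀ = 1) :
    B = U * (Uᵀ * B * W) * Wᵀ := by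
  have : U * (Uᵀ * B * W) * Wᵀ = (U * Uᵀ) * B * (W * Wᵀ) := by
    simp only [Matrix.mul_assoc]
  rw [this, hU, hW, Matrix.one_mul, Matrix.mul_one]


lemma emm_zero {n : ℕ} (P Q : Matrix (Fin n) (Fin n) ℝ)
    (C : Matrix (Fin (n+1)) (Fin (n+1)) ℝ) (j : Fin (n+1)) :
    (ext1 P * C * ext1 Q) 0 j = ∑ l, C 0 l * ext1 Q l j := by
  rw [mul_apply]
  refine Finset.sum_congr rfl fun l _ => ?_
  congr 1
  rw [mul_apply, Fin.sum_univ_succ]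
  simp

lemma emm_succ_succ {n : ℕ} (P Q : Matrix (Fin n) (Fin n) ℝ)
    (C : Matrix (Fin (n+1)) (Fin (n+1)) ℝ) (i j : Fin n) :
    (ext1 P * C * ext1 Q) i.succ j.succ
      = (P * C.submatrix Fin.succ Fin.succ * Q) i j := by
  rw [mul_apply, mul_apply, Fin.sum_univ_succ]
  simp only [ext1_sz, ext1_ss, ext1_zs, mul_zero, zero_add]
  refine Finset.sum_congr rfl fun l _ => ?_
  congr 1
  rw [mul_apply, mul_apply, Fin.sum_univ_succ]
  simp


lemma sqGMD : ∀ (n : ℕ) (B : Matrix (Fin n) (Fin n) ℝ) (d : ℝ), 0 < d → d ^ n = |B.det| →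
    ∃ U W T : Matrix (Fin n) (Fin n) ℝ, U * Uᵀ = 1 ∧ W * Wᵀ = 1 ∧
      (∀ i j : Fin n, (i:ℕ) < (j:ℕ) → T i j = 0) ∧ (∀ i, T i i = d) ∧ B = U * T * Wᵀ := by
  intro n
  induction n with
  | zero =>
    intro B d hd _
    refine ⟨1, 1, 0, by simp, by simp, fun i => i.elim0, fun i => i.elim0, ?_⟩
    ext i j
    exact i.elim0
  | succ m ih =>
    intro B d hd hdet
    obtain ⟨u, hu1, hu2⟩ := exists_unit B d hd hdet
    have hdne : d ≠ 0 := ne_of_gt hd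
    set v : Fin (m+1) → ℝ := d⁻¹ • (Bᵀ *ᵥ u) with hv
    have hBv : Bᵀ *ᵥ u = d • v := by
      rw [hv, smul_smul, mul_inv_cancel₀ hdne, one_smul]
    have hv1 : v ⬝ᵥ v = 1 := by
      rw [hv, smul_dotProduct, dotProduct_smul, hu2, smul_eq_mul, smul_eq_mul]
      field_simp
    obtain ⟨U₁, hU₁, hU₁col⟩ := householder u hu1
    obtain ⟨W₁, hW₁, hW₁col⟩ := householder v hv1
    have hW₁' : W₁ᵀ * W₁ = 1 := mul_eq_one_comm.mp hW₁
    set C := U₁ᵀ * B * W₁ with hC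
    have hrow : ∀ j, C 0 j = d * (1 : Matrix (Fin (m+1)) (Fin (m+1)) ℝ) 0 j := by
      intro j
      have h1 : ∀ l, (U₁ᵀ * B) 0 l = d * v l := by
        intro l
        rw [mul_apply]
        have e1 : ∀ k, U₁ᵀ 0 k * B k l = Bᵀ l k * u k := by
          intro k; rw [transpose_apply, transpose_apply, hU₁col]; ring
        rw [Finset.sum_congr rfl fun k _ => e1 k]
        have e2 : ∑ k, Bᵀ l k * u k = (Bᵀ *ᵥ u) l := rfl
        rw [e2, hBv]
        simp
      rw [hC, mul_apply]
      calc ∑ l, (U₁ᵀ * B) 0 l * W₁ l j = ∑ l, d * (W₁ᵀ 0 l * W₁ l j) := by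
            refine Finset.sum_congr rfl fun l _ => ?_
            rw [h1, transpose_apply, hW₁col]; ring
        _ = d * (W₁ᵀ * W₁) 0 j := by rw [← Finset.mul_sum, mul_apply]
        _ = d * (1 : Matrix (Fin (m+1)) (Fin (m+1)) ℝ) 0 j := by rw [hW₁']
    set C' := C.submatrix Fin.succ Fin.succ with hC'
    have hdetC : C.det = d * C'.det := by
      rw [det_succ_row_zero]
      rw [Finset.sum_eq_single 0]
      · rw [hrow, Fin.succAbove_zero]
        simp [one_apply, hC']
      · intro j _ hj
        rw [hrow]
        have h0 : (1 : Matrix (Fin (m+1)) (Fin (m+1)) ℝ) 0 j = 0 := one_apply_ne (Ne.symm hj)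
        rw [h0]; ring
      · intro hmem; exact absurd (Finset.mem_univ _) hmem
    have habsC : |C.det| = |B.det| := by
      rw [hC, det_mul, det_mul, det_transpose, abs_mul, abs_mul, abs_det_orth hU₁,
        abs_det_orth hW₁, one_mul, mul_one]
    have hdet' : d ^ m = |C'.det| := by
      have h2 : d ^ m * d = |C'.det| * d := by
        calc d ^ m * d = d ^ (m+1) := (pow_succ d m).symm
          _ = |B.det| := hdet
          _ = |C.det| := habsC.symm
          _ = |d| * |C'.det| := by rw [hdetC, abs_mul]
          _ = |C'.det| * d := by rw [abs_of_pos hd]; ring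
      exact mul_right_cancel₀ hdne h2
    obtain ⟨U', W', T', hU', hW', hT'low, hT'diag, hT'fact⟩ := ih C' d hd hdet'
    have hUorth : (U₁ * ext1 U') * (U₁ * ext1 U')ᵀ = 1 := by
      refine orth_mul hU₁ ?_
      rw [ext1_transpose, ext1_mul, hU', ext1_one]
    have hWorth : (W₁ * ext1 W') * (W₁ * ext1 W')ᵀ = 1 := by
      refine orth_mul hW₁ ?_
      rw [ext1_transpose, ext1_mul, hW', ext1_one]
    set T : Matrix (Fin (m+1)) (Fin (m+1)) ℝ := ext1 U'ᵀ * C * ext1 W' with hT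
    have hsub : U'ᵀ * C' * W' = T' := by
      rw [hT'fact]
      have hU'2 : U'ᵀ * U' = 1 := mul_eq_one_comm.mp hU'
      have hW'2 : W'ᵀ * W' = 1 := mul_eq_one_comm.mp hW'
      calc U'ᵀ * (U' * T' * W'ᵀ) * W' = U'ᵀ * (U' * (T' * (W'ᵀ * W'))) := by
            simp only [Matrix.mul_assoc]
        _ = T' := by rw [hW'2, Matrix.mul_one, ← Matrix.mul_assoc, hU'2, Matrix.one_mul]
    have honez : ∀ l : Fin m, (1 : Matrix (Fin (m+1)) (Fin (m+1)) ℝ) 0 l.succ = 0 :=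
      fun l => one_apply_ne (Ne.symm (Fin.succ_ne_zero l))
    have hrow0 : ∀ j, T 0 j = d * ext1 W' 0 j := by
      intro j
      rw [hT, emm_zero]
      calc ∑ l, C 0 l * ext1 W' l j
          = ∑ l, (d * (1 : Matrix (Fin (m+1)) (Fin (m+1)) ℝ) 0 l) * ext1 W' l j :=
            Finset.sum_congr rfl fun l _ => by rw [hrow]
        _ = d * ext1 W' 0 j := by
            rw [Fin.sum_univ_succ]
            simp [honez, Matrix.one_apply_eq]
    refine ⟨U₁ * ext1 U', W₁ * ext1 W', T, hUorth, hWorth, ?_, ?_, ?_⟩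
    · intro i j
      induction i using Fin.cases with
      | zero =>
        induction j using Fin.cases with
        | zero => intro hij; exact absurd hij (lt_irrefl _)
        | succ j => intro _; rw [hrow0]; simp
      | succ i =>
        induction j using Fin.cases with
        | zero =>
          intro hij
          simp only [Fin.val_zero] at hij
          exact absurd hij (Nat.not_lt_zero _)
        | succ j =>
          intro hij
          rw [hT, emm_succ_succ, ← hC', hsub]
          refine hT'low i j ?_
          simpa [Fin.val_succ, Nat.succ_lt_succ_iff] using hij
    · intro i
      induction i using Fin.cases with
      | zero => rw [hrow0]; simp
      | succ i => rw [hT, emm_succ_succ, ← hC', hsub]; exact hT'diag i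
    · have hTeq : T = (U₁ * ext1 U')ᵀ * B * (W₁ * ext1 W') := by
        rw [hT, hC, transpose_mul, ext1_transpose]
        simp only [Matrix.mul_assoc]
      rw [hTeq]
      exact sandwich _ _ _ hUorth hWorth

end GMD

open GMD in
/-- **Geometric mean decomposition.** Any real `M × N` matrix `A`
with `M ≤ N` and rank `M` admits a decomposition `A = U * T * Vᵀ` with `U`, `V`
orthogonal and `T` generalized lower-triangular whose diagonal entries all equal
one positive number `d` satisfying `d ^ (2 * M) = det (A * Aᵀ)`. -/
theorem geometric_mean_decomposition
    (M N : ℕ) (h : M ≤ N) (A : Matrix (Fin M) (Fin N) ℝ)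
    (hrank : A.rank = M) :
    ∃ (U : Matrix (Fin M) (Fin M) ℝ) (V : Matrix (Fin N) (Fin N) ℝ)
      (T : Matrix (Fin M) (Fin N) ℝ) (d : ℝ),
      U * Uᵀ = 1 ∧ V * Vᵀ = 1 ∧
      (∀ (i : Fin M) (j : Fin N), (i : ℕ) < (j : ℕ) → T i j = 0) ∧
      A = U * T * Vᵀ ∧
      0 < d ∧ (∀ i : Fin M, T i (Fin.castLE h i) = d) ∧
      d ^ (2 * M) = (A * Aᵀ).det := by
  set G := A * Aᵀ with hGdef
  have hpsd : G.PosSemidef := by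
    have := posSemidef_self_mul_conjTranspose A
    rwa [conjTranspose_eq_transpose_of_trivial] at this
  have hherm : G.IsHermitian := hpsd.isHermitian
  have hGrank : G.rank = M := by rw [hGdef, rank_self_mul_transpose, hrank]
  have hGdet : G.det ≠ 0 := by
    have hcard := hherm.rank_eq_card_non_zero_eigs
    have hall : ∀ i, hherm.eigenvalues i ≠ 0 := by
      intro i
      by_contra h0
      have hlt : Fintype.card {j // hherm.eigenvalues j ≠ 0} < Fintype.card (Fin M) :=
        Fintype.card_subtype_lt (x := i) (by simpa using h0)
      rw [← hcard, hGrank, Fintype.card_fin] at hlt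
      exact lt_irrefl _ hlt
    have hdetprod : G.det = ∏ i, hherm.eigenvalues i := by
      simpa using hherm.det_eq_prod_eigenvalues
    rw [hdetprod]
    exact Finset.prod_ne_zero_iff.mpr fun i _ => hall i
  set L := (open scoped MatrixOrder in CFC.sqrt G) with hLdef
  have hLL : L * L = G := by open scoped MatrixOrder in exact CFC.sqrt_mul_sqrt_self G hpsd.nonneg
  have hLsym : Lᵀ = L := by
    have h2 : Lᴴ = L := by open scoped MatrixOrder in exact (CFC.sqrt_nonneg G).posSemidef.isHermitian
    rwa [conjTranspose_eq_transpose_of_trivial] at h2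
  have hLdet2 : L.det * L.det = G.det := by rw [← det_mul, hLL]
  have hLdetne : L.det ≠ 0 := by
    intro h0; rw [h0, zero_mul] at hLdet2; exact hGdet hLdet2.symm
  have hLunit : IsUnit L.det := isUnit_iff_ne_zero.mpr hLdetne
  set D := |L.det| with hDdef
  have hDpos : 0 < D := abs_pos.mpr hLdetne
  set d := D ^ ((M:ℝ)⁻¹) with hddef
  have hdpos : 0 < d := Real.rpow_pos_of_pos hDpos _
  have hdM : d ^ M = D := by
    rcases Nat.eq_zero_or_pos M with hM0 | hMpos
    · subst hM0
      have : L.det = 1 := det_fin_zero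
      simp [hDdef, this]
    · have hMne : (M:ℝ) ≠ 0 := by exact_mod_cast hMpos.ne'
      rw [hddef, ← Real.rpow_natCast (D ^ ((M:ℝ)⁻¹)) M, ← Real.rpow_mul (le_of_lt hDpos),
        inv_mul_cancel₀ hMne]
      exact Real.rpow_one D
  obtain ⟨U, W, T₀, hU, hW, hT₀low, hT₀diag, hLfact⟩ := sqGMD M L d hdpos (by rw [hdM])
  set Q := L⁻¹ * A with hQdef
  have hLQ : L * Q = A := by
    rw [hQdef, ← Matrix.mul_assoc, mul_nonsing_inv _ hLunit, Matrix.one_mul]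
  have hQQ : Q * Qᵀ = 1 := by
    calc Q * Qᵀ = L⁻¹ * (A * Aᵀ) * (L⁻¹)ᵀ := by
          rw [hQdef, transpose_mul]
          simp only [Matrix.mul_assoc]
      _ = L⁻¹ * (L * L) * L⁻¹ := by rw [transpose_nonsing_inv, hLsym, ← hGdef, hLL]
      _ = 1 := by
          simp only [Matrix.mul_assoc]
          rw [mul_nonsing_inv _ hLunit, Matrix.mul_one, nonsing_inv_mul _ hLunit]
  set Q' := Wᵀ * Q with hQ'def
  have hQ'Q' : Q' * Q'ᵀ = 1 := by
    calc Q' * Q'ᵀ = Wᵀ * (Q * Qᵀ) * W := by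
          rw [hQ'def, transpose_mul, transpose_transpose]
          simp only [Matrix.mul_assoc]
      _ = 1 := by rw [hQQ, Matrix.mul_one, mul_eq_one_comm.mp hW]
  -- extend the orthonormal rows of Q' to an orthonormal basis
  set s : Set (Fin N) := {j | (j : ℕ) < M} with hsdef
  set vf : Fin N → EuclideanSpace ℝ (Fin N) := fun j =>
    if hj : (j : ℕ) < M then (WithLp.equiv 2 (Fin N → ℝ)).symm (fun l => Q' ⟨j, hj⟩ l)
    else 0 with hvf
  have hvfon : Orthonormal ℝ (s.restrict vf) := by
    rw [orthonormal_iff_ite]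
    rintro ⟨j, hj⟩ ⟨k, hk⟩
    have hj' : (j : ℕ) < M := hj
    have hk' : (k : ℕ) < M := hk
    have h1 : (Q' * Q'ᵀ) ⟨(j:ℕ), hj'⟩ ⟨(k:ℕ), hk'⟩
        = if (⟨(j:ℕ), hj'⟩ : Fin M) = ⟨(k:ℕ), hk'⟩ then (1:ℝ) else 0 := by
      rw [hQ'Q', one_apply]
    rw [mul_apply] at h1
    show ⟪vf j, vf k⟫ = _; simp only [hvf, dif_pos hj', dif_pos hk']
    rw [show (⟪(WithLp.equiv 2 (Fin N → ℝ)).symm (fun l => Q' ⟨j, hj'⟩ l),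
        (WithLp.equiv 2 (Fin N → ℝ)).symm (fun l => Q' ⟨k, hk'⟩ l)⟫)
        = ∑ l, Q' ⟨j, hj'⟩ l * Q' ⟨k, hk'⟩ l from by
      simp [PiLp.inner_apply]
      exact Finset.sum_congr rfl fun _ _ => mul_comm _ _]
    rw [show (∑ l, Q' ⟨j, hj'⟩ l * Q' ⟨k, hk'⟩ l) = ∑ l, Q' ⟨j, hj'⟩ l * Q'ᵀ l ⟨k, hk'⟩ from by
      simp [transpose_apply]]
    rw [h1]
    congr 1
    simp [Fin.ext_iff, Subtype.ext_iff]
  obtain ⟨b, hb⟩ := hvfon.exists_orthonormalBasis_extension_of_card_eq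
    (by simp)
  set R : Matrix (Fin N) (Fin N) ℝ := Matrix.of (fun j l => b j l) with hRdef
  have hRR : R * Rᵀ = 1 := by
    ext j k
    rw [mul_apply, one_apply]
    have h2 := orthonormal_iff_ite.mp b.orthonormal j k
    rw [show (⟪b j, b k⟫) = ∑ l, R j l * Rᵀ l k from by
      simp [PiLp.inner_apply, hRdef, transpose_apply]
      exact Finset.sum_congr rfl fun _ _ => mul_comm _ _] at h2
    exact h2
  have hRrow : ∀ (j : Fin N) (hj : (j:ℕ) < M) (l : Fin N), R j l = Q' ⟨j, hj⟩ l := by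
    intro j hj l
    have h3 : b j = vf j := hb j hj
    rw [hRdef]
    show (b j) l = _
    rw [h3, hvf]
    simp only [dif_pos hj]
    simp
  -- final data
  set T : Matrix (Fin M) (Fin N) ℝ :=
    Matrix.of (fun i j => if hj : (j:ℕ) < M then T₀ i ⟨j, hj⟩ else 0) with hTdef
  have hTapp : ∀ (i : Fin M) (j : Fin N), T i j = if hj : (j:ℕ) < M then T₀ i ⟨j, hj⟩ else 0 :=
    fun i j => rfl
  refine ⟨U, Rᵀ, T, d, hU, mul_eq_one_comm.mp hRR, ?_, ?_, hdpos, ?_, ?_⟩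
  · intro i j hij
    rw [hTapp]
    by_cases hj : (j:ℕ) < M
    · simp only [dif_pos hj]
      exact hT₀low i ⟨j, hj⟩ hij
    · simp only [dif_neg hj]
  · rw [transpose_transpose]
    have hTR : T * R = T₀ * Q' := by
      ext i l
      rw [mul_apply, mul_apply]
      have hzero : ∀ j ∈ Finset.univ, j ∉ Finset.univ.map (Fin.castLEEmb h) →
          T i j * R j l = 0 := by
        intro j _ hj
        have hnl : ¬ ((j:ℕ) < M) := by
          intro hlt
          exact hj (Finset.mem_map.mpr ⟨⟨(j:ℕ), hlt⟩, Finset.mem_univ _, by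
            simp [Fin.ext_iff]⟩)
        rw [hTapp, dif_neg hnl, zero_mul]
      rw [← Finset.sum_subset (Finset.subset_univ _) hzero, Finset.sum_map]
      refine Finset.sum_congr rfl fun i' _ => ?_
      have hlt : ((Fin.castLEEmb h i' : Fin N) : ℕ) < M := by
        simp [Fin.coe_castLE]
      rw [hTapp, dif_pos hlt, hRrow _ hlt]
      have hmk : (⟨((Fin.castLEEmb h i' : Fin N) : ℕ), hlt⟩ : Fin M) = i' := by
        simp [Fin.ext_iff]
      rw [hmk]
    calc A = L * Q := hLQ.symm
      _ = U * T₀ * Wᵀ * Q := by rw [← hLfact]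
      _ = U * (T₀ * Q') := by rw [hQ'def]; simp only [Matrix.mul_assoc]
      _ = U * (T * R) := by rw [hTR]
      _ = U * T * R := by rw [Matrix.mul_assoc]
  · intro i
    have hlt : ((Fin.castLE h i : Fin N) : ℕ) < M := by
      simp only [Fin.coe_castLE]
      exact i.isLt
    rw [hTapp, dif_pos hlt]
    have hmk : (⟨((Fin.castLE h i : Fin N) : ℕ), hlt⟩ : Fin M) = i := by
      simp [Fin.ext_iff]
    rw [hmk]
    exact hT₀diag i
  · rw [show 2 * M = M * 2 from mul_comm 2 M, pow_mul, hdM, hDdef, sq_abs, sq, ← det_mul, hLL]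
end

section
/- (Joint equi-diagonal triangularization, JET) Let H₁ be a proper real M×N₁ matrix and H₂ a proper real M×N₂ matrix (both with M rows). Then there exist an M×M orthogonal matrix U, an N₁×N₁ orthogonal matrix V₁, and an N₂×N₂ orthogonal matrix V₂ such that T₁ := Uᵀ * H₁ * V₁ and T₂ := Uᵀ * H₂ * V₂ are generalized lower-triangular matrices whose diagonal entries are positive and equal: T₁ i i = T₂ i i > 0 for every i = 1,…,M, and ∏_{i=1}^{M} T₁ i i = 1. -/
open Matrix BigOperators

namespace JET

variable {n m M N : ℕ}

/-- upper triangular: entries strictly below the diagonal vanish. -/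
def UT (R : Matrix (Fin n) (Fin n) ℝ) : Prop := ∀ ⦃i j : Fin n⦄, j < i → R i j = 0

/-- lower triangular: entries strictly above the diagonal vanish. -/
def LT (R : Matrix (Fin n) (Fin n) ℝ) : Prop := ∀ ⦃i j : Fin n⦄, i < j → R i j = 0

lemma UT.blockTriangular {R : Matrix (Fin n) (Fin n) ℝ} (h : UT R) :
    R.BlockTriangular id := fun _ _ hij => h hij

lemma LT.blockTriangular {R : Matrix (Fin n) (Fin n) ℝ} (h : LT R) :
    R.BlockTriangular OrderDual.toDual := fun _ _ hij => h hij

lemma UT.transpose {R : Matrix (Fin n) (Fin n) ℝ} (h : UT R) : LT Rᵀ :=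
  fun _ _ hij => h hij

lemma LT.transpose {R : Matrix (Fin n) (Fin n) ℝ} (h : LT R) : UT Rᵀ :=
  fun _ _ hij => h hij

lemma UT.mul {R S : Matrix (Fin n) (Fin n) ℝ} (hR : UT R) (hS : UT S) : UT (R * S) := by
  intro i j hij
  rw [mul_apply]
  refine Finset.sum_eq_zero fun k _ => ?_
  rcases lt_or_ge k i with hk | hk
  · rw [hR hk, zero_mul]
  · rw [hS (lt_of_lt_of_le hij hk), mul_zero]

lemma LT.mul {R S : Matrix (Fin n) (Fin n) ℝ} (hR : LT R) (hS : LT S) : LT (R * S) := by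
  intro i j hij
  rw [mul_apply]
  refine Finset.sum_eq_zero fun k _ => ?_
  rcases lt_or_ge i k with hk | hk
  · rw [hR hk, zero_mul]
  · rw [hS (lt_of_le_of_lt hk hij), mul_zero]

lemma UT.mul_diag {R S : Matrix (Fin n) (Fin n) ℝ} (hR : UT R) (hS : UT S) (i : Fin n) :
    (R * S) i i = R i i * S i i := by
  rw [mul_apply]
  refine Finset.sum_eq_single i (fun k _ hk => ?_) (by simp)
  rcases lt_or_ge k i with h | h
  · rw [hR h, zero_mul]
  · rw [hS (lt_of_le_of_ne h (Ne.symm hk)), mul_zero]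

lemma LT.mul_diag {R S : Matrix (Fin n) (Fin n) ℝ} (hR : LT R) (hS : LT S) (i : Fin n) :
    (R * S) i i = R i i * S i i := by
  rw [mul_apply]
  refine Finset.sum_eq_single i (fun k _ hk => ?_) (by simp)
  rcases lt_or_ge i k with h | h
  · rw [hR h, zero_mul]
  · rw [hS (lt_of_le_of_ne h hk), mul_zero]

lemma UT.det' {R : Matrix (Fin n) (Fin n) ℝ} (h : UT R) : R.det = ∏ i, R i i :=
  det_of_upperTriangular h.blockTriangular

lemma LT.det' {R : Matrix (Fin n) (Fin n) ℝ} (h : LT R) : R.det = ∏ i, R i i :=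
  det_of_lowerTriangular R h.blockTriangular

/-- the inverse of an upper triangular matrix with nonzero determinant
is upper triangular with inverted diagonal -/
lemma UT.inv {R : Matrix (Fin n) (Fin n) ℝ} (h : UT R) (hd : IsUnit R.det) :
    UT R⁻¹ ∧ ∀ i, R⁻¹ i i = (R i i)⁻¹ := by
  have : Invertible R := R.invertibleOfIsUnitDet hd
  have hinv : UT R⁻¹ := fun i j hij =>
    blockTriangular_inv_of_blockTriangular h.blockTriangular hij
  refine ⟨hinv, fun i => ?_⟩
  have h1 : (R * R⁻¹) i i = 1 := by rw [mul_nonsing_inv R hd]; simp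
  rw [UT.mul_diag h hinv i] at h1
  have hRii : R i i ≠ 0 := by
    intro h0
    rw [h0, zero_mul] at h1
    exact one_ne_zero h1.symm
  field_simp at h1 ⊢
  linarith [h1]

lemma conjT_eq_transpose (A : Matrix (Fin n) (Fin m) ℝ) : Aᴴ = Aᵀ := by
  ext i j; simp [conjTranspose_apply]

lemma posDef_of_psd_det {A : Matrix (Fin n) (Fin n) ℝ}
    (hA : A.PosSemidef) (hd : A.det ≠ 0) : A.PosDef := by
  refine PosDef.of_dotProduct_mulVec_pos hA.1 fun x hx => ?_
  rcases lt_or_eq_of_le (hA.dotProduct_mulVec_nonneg x) with h | h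
  · exact h
  · exfalso
    have h0 : A *ᵥ x = 0 := (hA.dotProduct_mulVec_zero_iff x).mp h.symm
    have : Invertible A := A.invertibleOfIsUnitDet (isUnit_iff_ne_zero.2 hd)
    have : x = 0 := by
      have := congrArg (fun y => A⁻¹ *ᵥ y) h0
      simpa [mulVec_mulVec, nonsing_inv_mul A (isUnit_iff_ne_zero.2 hd)] using this
    exact hx this

lemma posDef_self_mul_transpose {A : Matrix (Fin n) (Fin m) ℝ}
    (hd : (A * Aᵀ).det ≠ 0) : (A * Aᵀ).PosDef := by
  apply posDef_of_psd_det _ hd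
  have := posSemidef_self_mul_conjTranspose A
  rwa [conjT_eq_transpose] at this

lemma exists_cholesky {A : Matrix (Fin n) (Fin n) ℝ} (hA : A.PosDef) :
    ∃ L : Matrix (Fin n) (Fin n) ℝ, LT L ∧ (∀ i, 0 < L i i) ∧ L * Lᵀ = A := by
  haveI : WellFoundedLT (Fin n) := inferInstance
  have hdetu : IsUnit (LDL.lowerInv hA).det := by
    have h := LDL.invertibleLowerInv hA
    have hone : h.invOf * LDL.lowerInv hA = (1 : Matrix (Fin n) (Fin n) ℝ) := by
      rw [h.invOf_mul_self]
    have h2 := congrArg Matrix.det hone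
    rw [Matrix.det_mul, Matrix.det_one] at h2
    exact IsUnit.of_mul_eq_one _ ((mul_comm _ _).trans h2)
  haveI hinst : Invertible (LDL.lowerInv hA) := (LDL.lowerInv hA).invertibleOfIsUnitDet hdetu
  have hLinvLT : LT (LDL.lowerInv hA) := fun i j hij => LDL.lowerInv_triangular hA hij
  set L' := (LDL.lowerInv hA)⁻¹ with hL'
  have hlowLT : LT L' := by
    intro i j hij
    exact blockTriangular_inv_of_blockTriangular hLinvLT.blockTriangular hij
  have hcancel : L' * LDL.lowerInv hA = 1 := nonsing_inv_mul _ hdetu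
  -- A = L' * D * L'ᴴ
  have hAeq : A = L' * LDL.diag hA * L'ᴴ := by
    have h0 := LDL.diag_eq_lowerInv_conj hA
    rw [h0]
    symm
    calc L' * (LDL.lowerInv hA * A * (LDL.lowerInv hA)ᴴ) * L'ᴴ
        = (L' * LDL.lowerInv hA) * A * ((L' * LDL.lowerInv hA)ᴴ) := by
          rw [conjTranspose_mul]
          noncomm_ring [Matrix.mul_assoc]
      _ = A := by rw [hcancel]; simp
  -- diag entries are positive
  have hdpos : ∀ i, 0 < LDL.diagEntries hA i := by
    intro i
    have hrow : LDL.lowerInv hA i ≠ 0 := by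
      intro h0
      have := Matrix.det_eq_zero_of_row_eq_zero i (fun j => congrFun h0 j)
      exact hdetu.ne_zero this
    have hx : star (LDL.lowerInv hA i) ≠ 0 := by
      intro h0; apply hrow; simpa using congrArg star h0
    have := hA.dotProduct_mulVec_pos hx
    have heq : LDL.diagEntries hA i
        = star (star (LDL.lowerInv hA i)) ⬝ᵥ A *ᵥ star (LDL.lowerInv hA i) := by
      rw [LDL.diagEntries, EuclideanSpace.inner_toLp_toLp, dotProduct_comm]
    rw [heq]
    exact this
  set d := LDL.diagEntries hA with hd
  set L₀ := L' * diagonal (fun i => Real.sqrt (d i)) with hL₀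
  have hL₀LT : LT L₀ := by
    intro i j hij
    rw [hL₀, mul_diagonal]
    rw [hlowLT hij, zero_mul]
  have hL₀A : L₀ * L₀ᵀ = A := by
    have hdiagmul : diagonal (fun i => Real.sqrt (d i)) * (diagonal fun i => Real.sqrt (d i))
        = LDL.diag hA := by
      rw [diagonal_mul_diagonal, LDL.diag]
      have : (fun i => Real.sqrt (d i) * Real.sqrt (d i)) = LDL.diagEntries hA := by
        funext i; exact Real.mul_self_sqrt (hdpos i).le
      rw [this]
    have hct : L'ᴴ = L'ᵀ := conjT_eq_transpose L'
    calc L₀ * L₀ᵀ = L' * ((diagonal fun i => Real.sqrt (d i)) *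
          (diagonal fun i => Real.sqrt (d i))ᵀ) * L'ᵀ := by
            rw [hL₀, transpose_mul]; noncomm_ring [Matrix.mul_assoc]
      _ = A := by
        rw [diagonal_transpose, hdiagmul, ← hct, ← hAeq]
  -- diag entries of L₀ are nonzero
  have hdetL₀ : L₀.det ≠ 0 := by
    intro h0
    have : A.det = 0 := by rw [← hL₀A, det_mul, det_transpose, h0, mul_zero]
    exact (ne_of_gt hA.det_pos) this
  have hdiagne : ∀ i, L₀ i i ≠ 0 := by
    intro i h0
    apply hdetL₀
    rw [hL₀LT.det']
    exact Finset.prod_eq_zero (Finset.mem_univ i) h0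
  -- fix signs
  set s : Fin n → ℝ := fun i => if L₀ i i < 0 then -1 else 1 with hs
  refine ⟨L₀ * diagonal s, ?_, ?_, ?_⟩
  · intro i j hij
    rw [mul_diagonal, hL₀LT hij, zero_mul]
  · intro i
    rw [mul_diagonal]
    rcases lt_trichotomy (L₀ i i) 0 with h | h | h
    · simp only [hs, if_pos h]; linarith
    · exact absurd h (hdiagne i)
    · simp only [hs, if_neg (not_lt.2 h.le)]; linarith
  · have hss : diagonal s * (diagonal s)ᵀ = 1 := by
      rw [diagonal_transpose, diagonal_mul_diagonal]
      have : (fun i => s i * s i) = fun _ => (1:ℝ) := by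
        funext i
        rcases lt_or_ge (L₀ i i) 0 with h | h
        · simp [hs, h]
        · simp [hs, not_lt.2 h]
      rw [this, diagonal_one]
    calc L₀ * diagonal s * (L₀ * diagonal s)ᵀ
        = L₀ * (diagonal s * (diagonal s)ᵀ) * L₀ᵀ := by
          rw [transpose_mul]; noncomm_ring [Matrix.mul_assoc]
      _ = A := by rw [hss, Matrix.mul_one, hL₀A]

lemma posDef_transpose_mul_self {C : Matrix (Fin m) (Fin n) ℝ}
    (hd : (Cᵀ * C).det ≠ 0) : (Cᵀ * C).PosDef := by
  apply posDef_of_psd_det _ hd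
  have := posSemidef_conjTranspose_mul_self C
  rwa [conjT_eq_transpose] at this

lemma exists_QR {C : Matrix (Fin n) (Fin n) ℝ} (hC : C.det ≠ 0) :
    ∃ Q R : Matrix (Fin n) (Fin n) ℝ,
      Q * Qᵀ = 1 ∧ UT R ∧ (∀ i, 0 < R i i) ∧ C = Q * R := by
  have hCtC : (Cᵀ * C).det ≠ 0 := by
    rw [det_mul, det_transpose]
    exact mul_ne_zero hC hC
  obtain ⟨L, hLT, hLpos, hLe⟩ := exists_cholesky (posDef_transpose_mul_self hCtC)
  set R := Lᵀ with hR
  have hUT : UT R := hLT.transpose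
  have hRpos : ∀ i, 0 < R i i := fun i => hLpos i
  have hRdet : IsUnit R.det := by
    rw [hUT.det']
    exact (Finset.prod_pos (fun i _ => hRpos i)).ne'.isUnit
  have hRtR : Rᵀ * R = Cᵀ * C := by rw [hR, transpose_transpose, hLe]
  refine ⟨C * R⁻¹, R, ?_, hUT, hRpos, ?_⟩
  · rw [← mul_eq_one_comm]
    have : (C * R⁻¹)ᵀ * (C * R⁻¹) = R⁻¹ᵀ * (Cᵀ * C) * R⁻¹ := by
      rw [transpose_mul]
      noncomm_ring [Matrix.mul_assoc]
    rw [this, ← hRtR, transpose_nonsing_inv]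
    calc Rᵀ⁻¹ * (Rᵀ * R) * R⁻¹ = Rᵀ⁻¹ * Rᵀ * (R * R⁻¹) := by noncomm_ring [Matrix.mul_assoc]
      _ = 1 := by
        rw [nonsing_inv_mul _ (by rwa [det_transpose]), mul_nonsing_inv _ hRdet, Matrix.mul_one]
  · rw [nonsing_inv_mul_cancel_right _ _ hRdet]

lemma dot_mulVec_self (F : Matrix (Fin m) (Fin n) ℝ) (y : Fin n → ℝ) :
    (F *ᵥ y) ⬝ᵥ (F *ᵥ y) = y ⬝ᵥ ((Fᵀ * F) *ᵥ y) := by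
  rw [← mulVec_mulVec, dotProduct_mulVec y, vecMul_transpose]

lemma exists_unit_vec (hn : 0 < n) {F : Matrix (Fin n) (Fin n) ℝ} (hF : F.det ^ 2 = 1) :
    ∃ v : Fin n → ℝ, v ⬝ᵥ v = 1 ∧ (F *ᵥ v) ⬝ᵥ (F *ᵥ v) = 1 := by
  haveI : Nonempty (Fin n) := ⟨⟨0, hn⟩⟩
  have hdet : (Fᵀ * F).det = 1 := by rw [det_mul, det_transpose, ← sq]; exact hF
  have hG : (Fᵀ * F).PosDef := posDef_transpose_mul_self (by rw [hdet]; norm_num)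
  have hH : (Fᵀ * F).IsHermitian := hG.isHermitian
  set μ := hH.eigenvalues with hμ
  have hμpos : ∀ i, 0 < μ i := fun i => hG.eigenvalues_pos i
  have hprod : ∏ i, μ i = 1 := by
    have := hH.det_eq_prod_eigenvalues
    rw [hdet] at this
    exact_mod_cast this.symm
  set b := hH.eigenvectorBasis with hb
  have hdot : ∀ i j, (⇑(b i) : Fin n → ℝ) ⬝ᵥ ⇑(b j) = if i = j then 1 else 0 := by
    intro i j
    have := orthonormal_iff_ite.mp b.orthonormal i j
    simpa [PiLp.inner_apply, dotProduct, RCLike.inner_apply, conj_trivial, mul_comm] using this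
  have hGb : ∀ j, (Fᵀ * F) *ᵥ ⇑(b j) = μ j • ⇑(b j) := fun j => hH.mulVec_eigenvectorBasis j
  -- key evaluation
  have keyval : ∀ (x y : ℝ) (i j : Fin n), i ≠ j →
      ((x • ⇑(b i) + y • ⇑(b j)) ⬝ᵥ (x • ⇑(b i) + y • ⇑(b j)) = x ^ 2 + y ^ 2 ∧
        (F *ᵥ (x • ⇑(b i) + y • ⇑(b j))) ⬝ᵥ (F *ᵥ (x • ⇑(b i) + y • ⇑(b j)))
          = x ^ 2 * μ i + y ^ 2 * μ j) := by
    intro x y i j hij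
    constructor
    · simp [add_dotProduct, dotProduct_add, smul_dotProduct, dotProduct_smul, hdot, hij,
        hij.symm, smul_eq_mul]
      ring
    · rw [dot_mulVec_self]
      rw [mulVec_add, mulVec_smul, mulVec_smul, hGb, hGb]
      simp [add_dotProduct, dotProduct_add, smul_dotProduct, dotProduct_smul, hdot, hij,
        hij.symm, smul_eq_mul]
      ring
  by_cases hone : ∃ i, μ i = 1
  · obtain ⟨i, hi⟩ := hone
    refine ⟨⇑(b i), by simpa using hdot i i, ?_⟩
    rw [dot_mulVec_self, hGb]
    simp [dotProduct_smul, hdot i i, hi]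
  · push_neg at hone
    have hlow : ∃ i, μ i < 1 := by
      by_contra h
      push_neg at h
      have : (1:ℝ) < ∏ i, μ i := by
        calc (1:ℝ) = ∏ _i : Fin n, 1 := by simp
          _ < ∏ i, μ i := by
            apply Finset.prod_lt_prod_of_nonempty (by norm_num)
              (fun i _ => lt_of_le_of_ne (h i) (Ne.symm (hone i))) Finset.univ_nonempty
      rw [hprod] at this; norm_num at this
    have hhigh : ∃ j, 1 < μ j := by
      by_contra h
      push_neg at h
      have : ∏ i, μ i < 1 := by
        calc ∏ i, μ i < ∏ _i : Fin n, 1 :=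
              Finset.prod_lt_prod_of_nonempty (fun i _ => hμpos i)
                (fun i _ => lt_of_le_of_ne (h i) (hone i)) Finset.univ_nonempty
          _ = 1 := by simp
      rw [hprod] at this; norm_num at this
    obtain ⟨i, hi⟩ := hlow
    obtain ⟨j, hj⟩ := hhigh
    have hij : i ≠ j := fun h => by rw [h] at hi; linarith
    set s := (1 - μ i) / (μ j - μ i) with hsdef
    have hden : 0 < μ j - μ i := by linarith
    have hs0 : 0 ≤ s := div_nonneg (by linarith) hden.le
    have hs1 : s ≤ 1 := by
      rw [hsdef, div_le_one hden]; linarith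
    set x := Real.sqrt (1 - s) with hx
    set y := Real.sqrt s with hy
    have hx2 : x ^ 2 = 1 - s := Real.sq_sqrt (by linarith)
    have hy2 : y ^ 2 = s := Real.sq_sqrt hs0
    obtain ⟨k1, k2⟩ := keyval x y i j hij
    refine ⟨x • ⇑(b i) + y • ⇑(b j), ?_, ?_⟩
    · rw [k1, hx2, hy2]; ring
    · rw [k2, hx2, hy2, hsdef]
      field_simp
      ring
  done

/-! ### orthonormal bases and column matrices -/

lemma ob_dot {k : ℕ} (b : OrthonormalBasis (Fin k) ℝ (EuclideanSpace ℝ (Fin k))) (i j : Fin k) :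
    ∑ l, (b i l) * (b j l) = if i = j then 1 else 0 := by
  have := orthonormal_iff_ite.mp b.orthonormal i j
  simpa [PiLp.inner_apply, RCLike.inner_apply, conj_trivial, mul_comm] using this

/-- the matrix whose columns are the basis vectors -/
noncomputable def colM {k : ℕ} (b : OrthonormalBasis (Fin k) ℝ (EuclideanSpace ℝ (Fin k))) :
    Matrix (Fin k) (Fin k) ℝ := of fun i j => b j i

lemma colM_orth {k : ℕ} (b : OrthonormalBasis (Fin k) ℝ (EuclideanSpace ℝ (Fin k))) :
    colM b * (colM b)ᵀ = 1 := by
  rw [← mul_eq_one_comm]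
  ext i j
  rw [mul_apply, one_apply]
  rw [← ob_dot b i j]
  refine Finset.sum_congr rfl fun l _ => ?_
  rw [transpose_apply, colM, of_apply, of_apply]

lemma exists_basis_with_first {k : ℕ} (v : Fin (k+1) → ℝ) (hv : v ⬝ᵥ v = 1) :
    ∃ b : OrthonormalBasis (Fin (k+1)) ℝ (EuclideanSpace ℝ (Fin (k+1))), ∀ l, b 0 l = v l := by
  classical
  set u : Fin (k+1) → EuclideanSpace ℝ (Fin (k+1)) :=
    fun _ => (WithLp.equiv 2 (Fin (k+1) → ℝ)).symm v with hu
  have horth : Orthonormal ℝ (Set.restrict {(0 : Fin (k+1))} u) := by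
    rw [orthonormal_iff_ite]
    intro i j
    have hij : i = j := Subsingleton.elim i j
    subst hij
    rw [if_pos rfl]
    have h2 : (inner ℝ (Set.restrict {(0 : Fin (k+1))} u i)
        (Set.restrict {(0 : Fin (k+1))} u i) : ℝ) = v ⬝ᵥ v := by
      simp [hu, Set.restrict, PiLp.inner_apply, RCLike.inner_apply, conj_trivial, dotProduct,
        WithLp.equiv_symm_apply, PiLp.toLp_apply, EuclideanSpace.real_norm_sq_eq, ← sq]
    rw [h2, hv]
  obtain ⟨b, hb⟩ := horth.exists_orthonormalBasis_extension_of_card_eq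
    (by simp [finrank_euclideanSpace])
  refine ⟨b, fun l => ?_⟩
  rw [hb 0 (Set.mem_singleton 0)]
  simp [hu, WithLp.equiv_symm_apply, PiLp.toLp_apply]

/-! ### block lifting -/

def emb (n : ℕ) : Fin 1 ⊕ Fin n ≃ Fin (n+1) :=
  finSumFinEquiv.trans (finCongr (Nat.add_comm 1 n))

lemma emb_inl (a : Fin 1) : emb n (Sum.inl a) = 0 := by
  apply Fin.ext
  simp [emb, Fin.val_eq_zero a]

lemma emb_inr (j : Fin n) : emb n (Sum.inr j) = j.succ := by
  apply Fin.ext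
  simp [emb]

def lift (P : Matrix (Fin n) (Fin n) ℝ) : Matrix (Fin (n+1)) (Fin (n+1)) ℝ :=
  (fromBlocks 1 0 0 P).submatrix (emb n).symm (emb n).symm

lemma lift_mul (P S : Matrix (Fin n) (Fin n) ℝ) : lift P * lift S = lift (P * S) := by
  rw [lift, lift, submatrix_mul_equiv, fromBlocks_multiply]
  simp [lift]

lemma lift_transpose (P : Matrix (Fin n) (Fin n) ℝ) : (lift P)ᵀ = lift Pᵀ := by
  rw [lift, lift, transpose_submatrix, fromBlocks_transpose]
  simp

lemma lift_one : lift (1 : Matrix (Fin n) (Fin n) ℝ) = 1 := by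
  rw [lift, fromBlocks_one, submatrix_one_equiv]

lemma lift_orth {P : Matrix (Fin n) (Fin n) ℝ} (h : P * Pᵀ = 1) :
    lift P * (lift P)ᵀ = 1 := by
  rw [lift_transpose, lift_mul, h, lift_one]

/-! ### unit triangularization -/

lemma exists_unit_triangularization :
    ∀ (n : ℕ) (F : Matrix (Fin n) (Fin n) ℝ), F.det ^ 2 = 1 →
    ∃ Q Q' : Matrix (Fin n) (Fin n) ℝ, Q * Qᵀ = 1 ∧ Q' * Q'ᵀ = 1 ∧
      (∀ ⦃i j : Fin n⦄, j < i → (Q'ᵀ * F * Q) i j = 0) ∧ (∀ i, (Q'ᵀ * F * Q) i i = 1) := by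
  intro n
  induction n with
  | zero =>
    intro F _
    refine ⟨1, 1, by simp, by simp, fun i _ _ => i.elim0, fun i => i.elim0⟩
  | succ n ih =>
    intro F hF
    obtain ⟨v, hv, hFv⟩ := exists_unit_vec (Nat.succ_pos n) hF
    obtain ⟨b, hb0⟩ := exists_basis_with_first v hv
    obtain ⟨b', hb'0⟩ := exists_basis_with_first (F *ᵥ v) hFv
    set Q := colM b with hQ
    set Q' := colM b' with hQ'
    set G := Q'ᵀ * F * Q with hG
    -- first column of G
    have hG0 : ∀ i, G i 0 = if i = 0 then (1:ℝ) else 0 := by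
      intro i
      have h1 : ∀ k, (F * Q) k 0 = (F *ᵥ v) k := by
        intro k
        rw [mul_apply, mulVec, dotProduct]
        refine Finset.sum_congr rfl fun l _ => ?_
        rw [hQ, colM, of_apply, hb0]
      have h2 : G i 0 = ∑ k, (b' i k) * (b' 0 k) := by
        rw [hG, Matrix.mul_assoc, mul_apply]
        refine Finset.sum_congr rfl fun k _ => ?_
        rw [transpose_apply, h1 k, hQ', colM, of_apply, hb'0]
      rw [h2, ob_dot b' i 0]
    -- block structure
    set G₁ := G.submatrix Fin.succ Fin.succ with hG₁
    set r : Matrix (Fin 1) (Fin n) ℝ := of fun _ j => G 0 j.succ with hr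
    have hGblock : G = (fromBlocks 1 r 0 G₁).submatrix (emb n).symm (emb n).symm := by
      ext i j
      rw [submatrix_apply]
      obtain ⟨a, rfl⟩ : ∃ a, emb n a = i := ⟨(emb n).symm i, (emb n).apply_symm_apply i⟩
      obtain ⟨c, rfl⟩ : ∃ c, emb n c = j := ⟨(emb n).symm j, (emb n).apply_symm_apply j⟩
      rw [Equiv.symm_apply_apply, Equiv.symm_apply_apply]
      rcases a with a | a <;> rcases c with c | c
      · have ha : a = 0 := Subsingleton.elim a 0
        have hc : c = 0 := Subsingleton.elim c 0
        subst ha; subst hc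
        rw [emb_inl, hG0 0, if_pos rfl]
        simp [fromBlocks]
      · have ha : a = 0 := Subsingleton.elim a 0
        subst ha
        rw [emb_inl, emb_inr]
        simp [fromBlocks, hr]
      · have hc : c = 0 := Subsingleton.elim c 0
        subst hc
        rw [emb_inr, emb_inl, hG0 a.succ, if_neg (Fin.succ_ne_zero a)]
        simp [fromBlocks]
      · rw [emb_inr, emb_inr]
        simp [fromBlocks, hG₁]
    -- determinant of the block
    have hQorth : Q * Qᵀ = 1 := colM_orth b
    have hQ'orth : Q' * Q'ᵀ = 1 := colM_orth b'
    have hdetQ : Q.det ^ 2 = 1 := by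
      have := congrArg Matrix.det hQorth
      rwa [det_mul, det_transpose, ← sq, det_one] at this
    have hdetQ' : Q'.det ^ 2 = 1 := by
      have := congrArg Matrix.det hQ'orth
      rwa [det_mul, det_transpose, ← sq, det_one] at this
    have hdetG : G.det ^ 2 = 1 := by
      rw [hG, det_mul, det_mul, det_transpose]
      rw [mul_pow, mul_pow, hdetQ, hdetQ', hF]
      ring
    have hdetG₁ : G₁.det ^ 2 = 1 := by
      have h3 : G.det = G₁.det := by
        rw [hGblock, det_submatrix_equiv_self, det_fromBlocks_zero₂₁, det_one, one_mul]
      rwa [h3] at hdetG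
    -- induction
    obtain ⟨Q₁, Q₁', hQ₁o, hQ₁'o, htri, hdiag⟩ := ih G₁ hdetG₁
    have hT : (Q' * lift Q₁')ᵀ * F * (Q * lift Q₁)
        = (fromBlocks 1 (r * Q₁) 0 (Q₁'ᵀ * G₁ * Q₁)).submatrix (emb n).symm (emb n).symm := by
      have step1 : (Q' * lift Q₁')ᵀ * F * (Q * lift Q₁) = (lift Q₁'ᵀ) * G * lift Q₁ := by
        rw [transpose_mul, lift_transpose, hG]
        noncomm_ring [Matrix.mul_assoc]
      rw [step1, hGblock, lift, lift]
      rw [submatrix_mul_equiv, submatrix_mul_equiv, fromBlocks_multiply, fromBlocks_multiply]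
      congr 2 <;> simp [Matrix.mul_assoc]
    refine ⟨Q * lift Q₁, Q' * lift Q₁', ?_, ?_, ?_, ?_⟩
    · rw [transpose_mul]
      calc Q * lift Q₁ * ((lift Q₁)ᵀ * Qᵀ) = Q * (lift Q₁ * (lift Q₁)ᵀ) * Qᵀ := by
            noncomm_ring [Matrix.mul_assoc]
        _ = 1 := by rw [lift_orth hQ₁o, Matrix.mul_one, hQorth]
    · rw [transpose_mul]
      calc Q' * lift Q₁' * ((lift Q₁')ᵀ * Q'ᵀ) = Q' * (lift Q₁' * (lift Q₁')ᵀ) * Q'ᵀ := by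
            noncomm_ring [Matrix.mul_assoc]
        _ = 1 := by rw [lift_orth hQ₁'o, Matrix.mul_one, hQ'orth]
    · intro i j hij
      rw [hT, submatrix_apply]
      obtain ⟨a, rfl⟩ : ∃ a, emb n a = i := ⟨(emb n).symm i, (emb n).apply_symm_apply i⟩
      obtain ⟨c, rfl⟩ : ∃ c, emb n c = j := ⟨(emb n).symm j, (emb n).apply_symm_apply j⟩
      rw [Equiv.symm_apply_apply, Equiv.symm_apply_apply]
      rcases a with a | a <;> rcases c with c | c
      · exfalso
        rw [emb_inl a, emb_inl c] at hij
        exact absurd hij (lt_irrefl 0)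
      · exfalso
        rw [emb_inl a, emb_inr c] at hij
        exact absurd hij (Fin.not_lt_zero _)
      · simp [fromBlocks]
      · rw [emb_inr a, emb_inr c] at hij
        have hca : c < a := by rwa [Fin.succ_lt_succ_iff] at hij
        simp [fromBlocks, htri hca]
    · intro i
      rw [hT, submatrix_apply]
      obtain ⟨a, rfl⟩ : ∃ a, emb n a = i := ⟨(emb n).symm i, (emb n).apply_symm_apply i⟩
      rw [Equiv.symm_apply_apply]
      rcases a with a | a
      · simp [fromBlocks]
      · simp [fromBlocks, hdiag a]

lemma orth_symm {Q : Matrix (Fin n) (Fin n) ℝ} (h : Q * Qᵀ = 1) : Qᵀ * Q = 1 := by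
  rw [mul_eq_one_comm] at h; exact h

lemma orth_det_ne {Q : Matrix (Fin n) (Fin n) ℝ} (h : Q * Qᵀ = 1) : Q.det ≠ 0 := by
  intro h0
  have := congrArg Matrix.det h
  rw [det_mul, h0, zero_mul, det_one] at this
  norm_num at this

lemma squareJET {L₁ L₂ : Matrix (Fin n) (Fin n) ℝ}
    (t1 : LT L₁) (t2 : LT L₂) (p1 : ∀ i, 0 < L₁ i i) (p2 : ∀ i, 0 < L₂ i i)
    (hdet : L₁.det = L₂.det) :
    ∃ U V₁ V₂ : Matrix (Fin n) (Fin n) ℝ,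
      U * Uᵀ = 1 ∧ V₁ * V₁ᵀ = 1 ∧ V₂ * V₂ᵀ = 1 ∧
      LT (Uᵀ * L₁ * V₁) ∧ LT (Uᵀ * L₂ * V₂) ∧
      (∀ i, (Uᵀ * L₁ * V₁) i i = (Uᵀ * L₂ * V₂) i i) ∧
      (∀ i, 0 < (Uᵀ * L₁ * V₁) i i) := by
  have hdet1 : L₁.det ≠ 0 := by
    rw [t1.det']
    exact (Finset.prod_pos (fun i _ => p1 i)).ne'
  have hdet1t : L₁ᵀ.det ≠ 0 := by rwa [det_transpose]
  have hL1tinv : L₁ᵀ * (L₁ᵀ)⁻¹ = 1 := mul_nonsing_inv _ (isUnit_iff_ne_zero.2 hdet1t)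
  set F := L₂ᵀ * (L₁ᵀ)⁻¹ with hF
  have hFdet : F.det ^ 2 = 1 := by
    rw [hF, det_mul, det_transpose, det_nonsing_inv, det_transpose, Ring.inverse_eq_inv,
      ← hdet, mul_inv_cancel₀ hdet1]
    norm_num
  obtain ⟨Qv, Qv', hQo, hQ'o, htri, hdiag⟩ := exists_unit_triangularization n F hFdet
  set R₀ := Qv'ᵀ * F * Qv with hR₀
  have hR₀UT : UT R₀ := fun i j hij => htri hij
  set C := (L₁ᵀ)⁻¹ * Qv with hC
  have hCdet : C.det ≠ 0 := by
    rw [hC, det_mul, det_nonsing_inv, Ring.inverse_eq_inv]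
    exact mul_ne_zero (inv_ne_zero hdet1t) (orth_det_ne hQo)
  obtain ⟨U, R', hUo, hR'UT, hR'pos, hCQR⟩ := exists_QR hCdet
  have hR'det : IsUnit R'.det := by
    rw [hR'UT.det']
    exact (Finset.prod_pos (fun i _ => hR'pos i)).ne'.isUnit
  obtain ⟨hRUT, hRdiag⟩ := hR'UT.inv hR'det
  set R := R'⁻¹ with hRdef
  have hRpos : ∀ i, 0 < R i i := fun i => by
    rw [hRdiag i]; exact inv_pos.2 (hR'pos i)
  -- L₁ᵀ * U = Qv * R
  have hU : U = C * R := by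
    rw [hRdef, hCQR, Matrix.mul_assoc, mul_nonsing_inv _ hR'det, Matrix.mul_one]
  have hL1U : L₁ᵀ * U = Qv * R := by
    rw [hU, hC]
    calc L₁ᵀ * ((L₁ᵀ)⁻¹ * Qv * R) = (L₁ᵀ * (L₁ᵀ)⁻¹) * (Qv * R) := by
          noncomm_ring [Matrix.mul_assoc]
      _ = Qv * R := by rw [hL1tinv, Matrix.one_mul]
  -- T₁
  have hT1 : Uᵀ * L₁ * Qv = Rᵀ := by
    have h := congrArg Matrix.transpose hL1U
    rw [transpose_mul, transpose_mul, transpose_transpose] at h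
    calc Uᵀ * L₁ * Qv = (Rᵀ * Qvᵀ) * Qv := by rw [← h]
      _ = Rᵀ * (Qvᵀ * Qv) := Matrix.mul_assoc _ _ _
      _ = Rᵀ := by rw [orth_symm hQo, Matrix.mul_one]
  -- T₂
  have hL2t : F * L₁ᵀ = L₂ᵀ := by
    rw [hF]
    exact nonsing_inv_mul_cancel_right _ _ (isUnit_iff_ne_zero.2 hdet1t)
  have hFQ : F * Qv = Qv' * R₀ := by
    rw [hR₀]
    calc F * Qv = (Qv' * Qv'ᵀ) * (F * Qv) := by rw [hQ'o, Matrix.one_mul]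
      _ = Qv' * (Qv'ᵀ * F * Qv) := by noncomm_ring [Matrix.mul_assoc]
  have hL2U : L₂ᵀ * U = Qv' * (R₀ * R) := by
    calc L₂ᵀ * U = (F * L₁ᵀ) * U := by rw [hL2t]
      _ = F * (L₁ᵀ * U) := Matrix.mul_assoc _ _ _
      _ = F * (Qv * R) := by rw [hL1U]
      _ = (F * Qv) * R := (Matrix.mul_assoc _ _ _).symm
      _ = (Qv' * R₀) * R := by rw [hFQ]
      _ = Qv' * (R₀ * R) := Matrix.mul_assoc _ _ _
  have hT2 : Uᵀ * L₂ * Qv' = Rᵀ * R₀ᵀ := by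
    have h := congrArg Matrix.transpose hL2U
    rw [transpose_mul, transpose_mul, transpose_mul, transpose_transpose] at h
    calc Uᵀ * L₂ * Qv' = (Rᵀ * R₀ᵀ * Qv'ᵀ) * Qv' := by rw [h]
      _ = (Rᵀ * R₀ᵀ) * (Qv'ᵀ * Qv') := by noncomm_ring [Matrix.mul_assoc]
      _ = Rᵀ * R₀ᵀ := by rw [orth_symm hQ'o, Matrix.mul_one]
  refine ⟨U, Qv, Qv', hUo, hQo, hQ'o, ?_, ?_, ?_, ?_⟩
  · rw [hT1]; exact hRUT.transpose
  · rw [hT2]; exact (hRUT.transpose).mul (hR₀UT.transpose)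
  · intro i
    rw [hT1, hT2, (hRUT.transpose).mul_diag (hR₀UT.transpose) i]
    have : R₀ i i = 1 := hdiag i
    rw [transpose_apply, transpose_apply, this, mul_one]
  · intro i
    rw [hT1, transpose_apply]
    exact hRpos i

/-! ### the rectangular embedding -/

def embN (h : M ≤ N) : Fin M ⊕ Fin (N - M) ≃ Fin N :=
  finSumFinEquiv.trans (finCongr (Nat.add_sub_cancel' h))

lemma embN_inl (h : M ≤ N) (j : Fin M) : embN h (Sum.inl j) = Fin.castLE h j := by
  apply Fin.ext
  simp [embN]

lemma embN_inr_val (h : M ≤ N) (r : Fin (N - M)) : M ≤ (embN h (Sum.inr r) : ℕ) := by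
  simp [embN]

def liftN (h : M ≤ N) (P : Matrix (Fin M) (Fin M) ℝ) : Matrix (Fin N) (Fin N) ℝ :=
  (fromBlocks P 0 0 1).submatrix (embN h).symm (embN h).symm

lemma liftN_mul (h : M ≤ N) (P S : Matrix (Fin M) (Fin M) ℝ) :
    liftN h P * liftN h S = liftN h (P * S) := by
  rw [liftN, liftN, submatrix_mul_equiv, fromBlocks_multiply]
  simp [liftN]

lemma liftN_transpose (h : M ≤ N) (P : Matrix (Fin M) (Fin M) ℝ) :
    (liftN h P)ᵀ = liftN h Pᵀ := by
  rw [liftN, liftN, transpose_submatrix, fromBlocks_transpose]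
  simp

lemma liftN_one (h : M ≤ N) : liftN h (1 : Matrix (Fin M) (Fin M) ℝ) = 1 := by
  rw [liftN, fromBlocks_one, submatrix_one_equiv]

lemma liftN_orth (h : M ≤ N) {P : Matrix (Fin M) (Fin M) ℝ} (hP : P * Pᵀ = 1) :
    liftN h P * (liftN h P)ᵀ = 1 := by
  rw [liftN_transpose, liftN_mul, hP, liftN_one]

/-- multiplying a `[L | 0]`-shaped matrix by a lifted block matrix -/
lemma mul_liftN (h : M ≤ N) (K : Matrix (Fin M) (Fin N) ℝ) (L P : Matrix (Fin M) (Fin M) ℝ)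
    (hK1 : ∀ i j, K i (Fin.castLE h j) = L i j)
    (hK2 : ∀ i (j : Fin N), M ≤ (j : ℕ) → K i j = 0) :
    (∀ i j, (K * liftN h P) i (Fin.castLE h j) = (L * P) i j) ∧
    (∀ i (j : Fin N), M ≤ (j : ℕ) → (K * liftN h P) i j = 0) := by
  set B : Matrix (Fin M ⊕ Fin (N - M)) (Fin M ⊕ Fin (N - M)) ℝ := fromBlocks P 0 0 1 with hB
  have hentry : ∀ a c, liftN h P (embN h a) (embN h c) = B a c := by
    intro a c
    rw [liftN, submatrix_apply, Equiv.symm_apply_apply, Equiv.symm_apply_apply, hB]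
  have hsum : ∀ i (c : Fin M ⊕ Fin (N - M)), (K * liftN h P) i (embN h c)
      = ∑ a : Fin M ⊕ Fin (N - M), K i (embN h a) * B a c := by
    intro i c
    rw [mul_apply]
    rw [← Equiv.sum_comp (embN h) (fun k => K i k * liftN h P k (embN h c))]
    refine Finset.sum_congr rfl fun a _ => ?_
    rw [hentry]
  constructor
  · intro i j
    have hj : Fin.castLE h j = embN h (Sum.inl j) := (embN_inl h j).symm
    rw [hj, hsum, Fintype.sum_sum_type]
    have e1 : ∀ m : Fin M, K i (embN h (Sum.inl m)) * B (Sum.inl m) (Sum.inl j)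
        = L i m * P m j := by
      intro m
      rw [embN_inl, hK1]
      rfl
    have e2 : ∀ r : Fin (N - M), K i (embN h (Sum.inr r)) * B (Sum.inr r) (Sum.inl j) = 0 := by
      intro r
      have hbz : B (Sum.inr r) (Sum.inl j) = (0 : ℝ) := rfl
      rw [hbz, mul_zero]
    rw [Finset.sum_congr rfl (fun m _ => e1 m), Finset.sum_congr rfl (fun r _ => e2 r)]
    rw [mul_apply]
    simp
  · intro i j hj
    obtain ⟨c, rfl⟩ : ∃ c, embN h c = j := ⟨(embN h).symm j, (embN h).apply_symm_apply j⟩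
    rcases c with c | c
    · exfalso
      rw [embN_inl] at hj
      have : (Fin.castLE h c : ℕ) = (c : ℕ) := rfl
      omega
    · rw [hsum, Fintype.sum_sum_type]
      have e1 : ∀ m : Fin M, K i (embN h (Sum.inl m)) * B (Sum.inl m) (Sum.inr c) = 0 := by
        intro m
        have hbz : B (Sum.inl m) (Sum.inr c) = (0 : ℝ) := rfl
        rw [hbz, mul_zero]
      have e2 : ∀ r : Fin (N - M), K i (embN h (Sum.inr r)) * B (Sum.inr r) (Sum.inr c) = 0 := by
        intro r
        rw [hK2 i _ (embN_inr_val h r), zero_mul]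
      rw [Finset.sum_congr rfl (fun m _ => e1 m), Finset.sum_congr rfl (fun r _ => e2 r)]
      simp

/-- propagate `[L|0]` structure through left multiplication -/
lemma left_mul_struct (h : M ≤ N) (K : Matrix (Fin M) (Fin N) ℝ)
    (L W : Matrix (Fin M) (Fin M) ℝ)
    (hK1 : ∀ i j, K i (Fin.castLE h j) = L i j)
    (hK2 : ∀ i (j : Fin N), M ≤ (j : ℕ) → K i j = 0) :
    (∀ i j, (W * K) i (Fin.castLE h j) = (W * L) i j) ∧
    (∀ i (j : Fin N), M ≤ (j : ℕ) → (W * K) i j = 0) := by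
  constructor
  · intro i j
    rw [mul_apply, mul_apply]
    exact Finset.sum_congr rfl fun m _ => by rw [hK1]
  · intro i j hj
    rw [mul_apply]
    exact Finset.sum_eq_zero fun m _ => by rw [hK2 m j hj, mul_zero]

/-- the rectangular reduction: `H` can be rotated to `[L | 0]`. -/
lemma rect_reduction (h : M ≤ N) (H : Matrix (Fin M) (Fin N) ℝ)
    (L : Matrix (Fin M) (Fin M) ℝ) (hdet : L.det ≠ 0) (hLL : L * Lᵀ = H * Hᵀ) :
    ∃ V : Matrix (Fin N) (Fin N) ℝ, V * Vᵀ = 1 ∧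
      (∀ i j, (H * V) i (Fin.castLE h j) = L i j) ∧
      (∀ i (j : Fin N), M ≤ (j : ℕ) → (H * V) i j = 0) := by
  classical
  have hLu : IsUnit L.det := isUnit_iff_ne_zero.2 hdet
  set W := L⁻¹ * H with hW
  have hHLW : H = L * W := by
    rw [hW, ← Matrix.mul_assoc, mul_nonsing_inv _ hLu, Matrix.one_mul]
  have hWWt : W * Wᵀ = 1 := by
    have : W * Wᵀ = L⁻¹ * (H * Hᵀ) * (L⁻¹)ᵀ := by
      rw [hW, transpose_mul]
      noncomm_ring [Matrix.mul_assoc]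
    rw [this, ← hLL, transpose_nonsing_inv]
    calc L⁻¹ * (L * Lᵀ) * Lᵀ⁻¹ = (L⁻¹ * L) * (Lᵀ * Lᵀ⁻¹) := by noncomm_ring [Matrix.mul_assoc]
      _ = 1 := by
        rw [nonsing_inv_mul _ hLu, mul_nonsing_inv _ (by rwa [det_transpose, isUnit_iff_ne_zero])]
        rw [Matrix.mul_one]
  have hWdot : ∀ a c : Fin M, ∑ k, W a k * W c k = if a = c then 1 else 0 := by
    intro a c
    have := congrFun (congrFun hWWt a) c
    rw [mul_apply, one_apply] at this
    simpa [transpose_apply] using this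
  -- build the orthonormal family
  set u : Fin N → EuclideanSpace ℝ (Fin N) :=
    fun k => if hk : (k : ℕ) < M then (WithLp.equiv 2 (Fin N → ℝ)).symm (W ⟨k, hk⟩) else 0
    with hu
  set s : Set (Fin N) := {k | (k : ℕ) < M} with hs
  have horth : Orthonormal ℝ (Set.restrict s u) := by
    rw [orthonormal_iff_ite]
    rintro ⟨i, hi⟩ ⟨j, hj⟩
    have hi' : (i : ℕ) < M := hi
    have hj' : (j : ℕ) < M := hj
    have h2 : (inner ℝ (Set.restrict s u ⟨i, hi⟩) (Set.restrict s u ⟨j, hj⟩) : ℝ)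
        = ∑ k, W ⟨i, hi'⟩ k * W ⟨j, hj'⟩ k := by
      simp [hu, Set.restrict, Set.restrict_apply, dif_pos hi', dif_pos hj', PiLp.inner_apply,
        RCLike.inner_apply, conj_trivial, WithLp.equiv_symm_apply, PiLp.toLp_apply, mul_comm]
    rw [h2, hWdot]
    congr 1
    simp only [Fin.mk.injEq, Subtype.mk.injEq, eq_iff_iff]
    exact ⟨fun hq => Fin.ext hq, fun hq => by rw [hq]⟩
  obtain ⟨b, hb⟩ := horth.exists_orthonormalBasis_extension_of_card_eq
    (by simp [finrank_euclideanSpace])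
  have hbW : ∀ (m : Fin M) l, b (Fin.castLE h m) l = W m l := by
    intro m l
    have hmem : (Fin.castLE h m) ∈ s := by
      simp only [hs, Set.mem_setOf_eq]
      exact m.2
    rw [hb _ hmem]
    have : ((Fin.castLE h m : Fin N) : ℕ) < M := m.2
    simp only [hu, dif_pos this]
    rw [WithLp.equiv_symm_apply, PiLp.toLp_apply]
    congr 1
  refine ⟨colM b, colM_orth b, ?_, ?_⟩
  · intro i j
    have hkey : ∀ k, (H * colM b) i k = ∑ m, L i m * (∑ l, b (Fin.castLE h m) l * b k l) := by
      intro k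
      rw [hHLW, Matrix.mul_assoc, mul_apply]
      refine Finset.sum_congr rfl fun m _ => ?_
      congr 1
      rw [mul_apply]
      refine Finset.sum_congr rfl fun l _ => ?_
      rw [colM, of_apply, hbW]
    rw [hkey]
    have : ∀ m, L i m * (∑ l, b (Fin.castLE h m) l * b (Fin.castLE h j) l)
        = L i m * (if m = j then 1 else 0) := by
      intro m
      rw [ob_dot]
      have hiff : (Fin.castLE h m = Fin.castLE h j) ↔ m = j := by
        constructor
        · intro hq; exact Fin.ext (by simpa using congrArg Fin.val hq)
        · intro hq; rw [hq]
      rw [if_congr hiff rfl rfl]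
    rw [Finset.sum_congr rfl (fun m _ => this m)]
    simp only [mul_ite, mul_one, mul_zero, Finset.sum_ite_eq', Finset.mem_univ, if_true]
  · intro i j hj
    have hkey : ∀ k, (H * colM b) i k = ∑ m, L i m * (∑ l, b (Fin.castLE h m) l * b k l) := by
      intro k
      rw [hHLW, Matrix.mul_assoc, mul_apply]
      refine Finset.sum_congr rfl fun m _ => ?_
      congr 1
      rw [mul_apply]
      refine Finset.sum_congr rfl fun l _ => ?_
      rw [colM, of_apply, hbW]
    rw [hkey]
    refine Finset.sum_eq_zero fun m _ => ?_
    rw [ob_dot]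
    have : (Fin.castLE h m) ≠ j := by
      intro hq
      have := congrArg Fin.val hq
      simp at this
      omega
    rw [if_neg this, mul_zero]

lemma orth_det_sq {Q : Matrix (Fin n) (Fin n) ℝ} (h : Q * Qᵀ = 1) : Q.det ^ 2 = 1 := by
  have := congrArg Matrix.det h
  rwa [det_mul, det_transpose, ← sq, det_one] at this

lemma eq_one_of_sq_eq_one {x : ℝ} (h : x ^ 2 = 1) (hx : 0 < x) : x = 1 := by
  have : (x - 1) * (x + 1) = 0 := by nlinarith
  rcases mul_eq_zero.mp this with h' | h' <;> linarith

end JET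

open JET

/-- **Joint equi-diagonal triangularization, JET.** Two proper
matrices `H₁` (of size `M × N₁`) and `H₂` (of size `M × N₂`) can be jointly
triangularized by orthogonal matrices `U`, `V₁`, `V₂` so that
`T₁ = Uᵀ * H₁ * V₁` and `T₂ = Uᵀ * H₂ * V₂` are generalized lower-triangular
with equal, positive diagonals of unit product. -/
theorem joint_equi_diagonal_triangularization
    (M N₁ N₂ : ℕ) (h1 : M ≤ N₁) (h2 : M ≤ N₂)
    (H₁ : Matrix (Fin M) (Fin N₁) ℝ) (H₂ : Matrix (Fin M) (Fin N₂) ℝ)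
    (hr1 : H₁.rank = M) (hd1 : (H₁ * H₁ᵀ).det = 1)
    (hr2 : H₂.rank = M) (hd2 : (H₂ * H₂ᵀ).det = 1) :
    ∃ (U : Matrix (Fin M) (Fin M) ℝ) (V₁ : Matrix (Fin N₁) (Fin N₁) ℝ)
      (V₂ : Matrix (Fin N₂) (Fin N₂) ℝ),
      U * Uᵀ = 1 ∧ V₁ * V₁ᵀ = 1 ∧ V₂ * V₂ᵀ = 1 ∧
      (∀ (i : Fin M) (j : Fin N₁), (i : ℕ) < (j : ℕ) → (Uᵀ * H₁ * V₁) i j = 0) ∧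
      (∀ (i : Fin M) (j : Fin N₂), (i : ℕ) < (j : ℕ) → (Uᵀ * H₂ * V₂) i j = 0) ∧
      (∀ i : Fin M,
        (Uᵀ * H₁ * V₁) i (Fin.castLE h1 i) = (Uᵀ * H₂ * V₂) i (Fin.castLE h2 i)) ∧
      (∀ i : Fin M, 0 < (Uᵀ * H₁ * V₁) i (Fin.castLE h1 i)) ∧
      ∏ i : Fin M, (Uᵀ * H₁ * V₁) i (Fin.castLE h1 i) = 1 := by
  have hA1 : (H₁ * H₁ᵀ).PosDef := posDef_self_mul_transpose (by rw [hd1]; norm_num)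
  have hA2 : (H₂ * H₂ᵀ).PosDef := posDef_self_mul_transpose (by rw [hd2]; norm_num)
  obtain ⟨L₁, t1, p1, hL1⟩ := exists_cholesky hA1
  obtain ⟨L₂, t2, p2, hL2⟩ := exists_cholesky hA2
  have hdL1sq : L₁.det ^ 2 = 1 := by
    have := congrArg Matrix.det hL1
    rwa [det_mul, det_transpose, ← sq, hd1] at this
  have hdL2sq : L₂.det ^ 2 = 1 := by
    have := congrArg Matrix.det hL2
    rwa [det_mul, det_transpose, ← sq, hd2] at this
  have hdL1pos : 0 < L₁.det := by rw [t1.det']; exact Finset.prod_pos fun i _ => p1 i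
  have hdL2pos : 0 < L₂.det := by rw [t2.det']; exact Finset.prod_pos fun i _ => p2 i
  have hdL1 : L₁.det = 1 := eq_one_of_sq_eq_one hdL1sq hdL1pos
  have hdL2 : L₂.det = 1 := eq_one_of_sq_eq_one hdL2sq hdL2pos
  obtain ⟨U, P₁, P₂, hUo, hP1o, hP2o, hT1lt, hT2lt, hdeq, hdpos⟩ :=
    squareJET t1 t2 p1 p2 (by rw [hdL1, hdL2])
  obtain ⟨V₁r, hV1o, hc1, hz1⟩ := rect_reduction h1 H₁ L₁ hdL1pos.ne' hL1
  obtain ⟨V₂r, hV2o, hc2, hz2⟩ := rect_reduction h2 H₂ L₂ hdL2pos.ne' hL2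
  -- structure of the triangularized rectangular matrices
  obtain ⟨hm1a, hm1b⟩ := left_mul_struct h1 (H₁ * V₁r) L₁ Uᵀ hc1 hz1
  obtain ⟨hm2a, hm2b⟩ := left_mul_struct h2 (H₂ * V₂r) L₂ Uᵀ hc2 hz2
  obtain ⟨hE1a, hE1b⟩ := mul_liftN h1 (Uᵀ * (H₁ * V₁r)) (Uᵀ * L₁) P₁ hm1a hm1b
  obtain ⟨hE2a, hE2b⟩ := mul_liftN h2 (Uᵀ * (H₂ * V₂r)) (Uᵀ * L₂) P₂ hm2a hm2b
  have hassoc1 : Uᵀ * H₁ * (V₁r * liftN h1 P₁) = (Uᵀ * (H₁ * V₁r)) * liftN h1 P₁ := by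
    noncomm_ring [Matrix.mul_assoc]
  have hassoc2 : Uᵀ * H₂ * (V₂r * liftN h2 P₂) = (Uᵀ * (H₂ * V₂r)) * liftN h2 P₂ := by
    noncomm_ring [Matrix.mul_assoc]
  have hsq1 : ∀ i j, ((Uᵀ * L₁) * P₁) i j = (Uᵀ * L₁ * P₁) i j := fun i j => rfl
  refine ⟨U, V₁r * liftN h1 P₁, V₂r * liftN h2 P₂, hUo, ?_, ?_, ?_, ?_, ?_, ?_, ?_⟩
  · calc V₁r * liftN h1 P₁ * (V₁r * liftN h1 P₁)ᵀ
        = V₁r * (liftN h1 P₁ * (liftN h1 P₁)ᵀ) * V₁rᵀ := by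
          rw [transpose_mul]; noncomm_ring [Matrix.mul_assoc]
      _ = 1 := by rw [liftN_orth h1 hP1o, Matrix.mul_one, hV1o]
  · calc V₂r * liftN h2 P₂ * (V₂r * liftN h2 P₂)ᵀ
        = V₂r * (liftN h2 P₂ * (liftN h2 P₂)ᵀ) * V₂rᵀ := by
          rw [transpose_mul]; noncomm_ring [Matrix.mul_assoc]
      _ = 1 := by rw [liftN_orth h2 hP2o, Matrix.mul_one, hV2o]
  · intro i j hij
    rw [hassoc1]
    by_cases hjM : (j : ℕ) < M
    · have hj : j = Fin.castLE h1 ⟨(j : ℕ), hjM⟩ := Fin.ext rfl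
      rw [hj, hE1a]
      exact hT1lt (show i < (⟨(j : ℕ), hjM⟩ : Fin M) from hij)
    · exact hE1b i j (le_of_not_gt hjM)
  · intro i j hij
    rw [hassoc2]
    by_cases hjM : (j : ℕ) < M
    · have hj : j = Fin.castLE h2 ⟨(j : ℕ), hjM⟩ := Fin.ext rfl
      rw [hj, hE2a]
      exact hT2lt (show i < (⟨(j : ℕ), hjM⟩ : Fin M) from hij)
    · exact hE2b i j (le_of_not_gt hjM)
  · intro i
    rw [hassoc1, hassoc2, hE1a, hE2a]
    exact hdeq i
  · intro i
    rw [hassoc1, hE1a]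
    exact hdpos i
  · have hprodeq : ∀ i : Fin M,
        (Uᵀ * H₁ * (V₁r * liftN h1 P₁)) i (Fin.castLE h1 i) = (Uᵀ * L₁ * P₁) i i := by
      intro i
      rw [hassoc1, hE1a]
    rw [Finset.prod_congr rfl (fun i _ => hprodeq i)]
    have hdet : (Uᵀ * L₁ * P₁).det ^ 2 = 1 := by
      rw [det_mul, det_mul, det_transpose, mul_pow, mul_pow, orth_det_sq hUo, hdL1sq,
        orth_det_sq hP1o]
      ring
    rw [← hT1lt.det']
    exact eq_one_of_sq_eq_one hdet (by rw [hT1lt.det']; exact Finset.prod_pos fun i _ => hdpos i)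
end

section
/- (High-SNR behavior of the MIMO capacity; Lemma 1) Let H be a proper real M×N matrix and for P > 0 let C(H, P) be the supremum of (1/2) · log det(I_M + H * K * Hᵀ) over all N×N real positive-semidefinite matrices K with trace K ≤ P. Then C(H, P) − (M/2) · log(P/M) tends to 0 as P → ∞. -/
open Matrix



namespace MimoAux

variable {n : Type*} [Fintype n] [DecidableEq n]

lemma psd_add {A B : Matrix n n ℝ} (hA : A.PosSemidef) (hB : B.PosSemidef) :
    (A + B).PosSemidef := by
  refine ⟨hA.1.add hB.1, fun x => ?_⟩
  exact (hA.add hB).2 x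

lemma psd_smul {A : Matrix n n ℝ} (hA : A.PosSemidef) {c : ℝ} (hc : 0 ≤ c) :
    (c • A).PosSemidef := by
  refine ⟨?_, fun x => ?_⟩
  · unfold Matrix.IsHermitian
    rw [Matrix.conjTranspose_smul, hA.1.eq]
    simp
  · exact (hA.smul hc).2 x

lemma trace_eq_sum {A : Matrix n n ℝ} (hA : A.IsHermitian) :
    A.trace = ∑ i, hA.eigenvalues i := by
  conv_lhs => rw [hA.spectral_theorem, Unitary.conjStarAlgAut_apply]
  rw [Matrix.trace_mul_cycle, Matrix.mem_unitaryGroup_iff'.mp (hA.eigenvectorUnitary).2,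
    one_mul, Matrix.trace_diagonal]
  simp

lemma trace_nonneg' {A : Matrix n n ℝ} (hA : A.PosSemidef) : 0 ≤ A.trace := by
  rw [trace_eq_sum hA.1]
  exact Finset.sum_nonneg fun i _ => hA.eigenvalues_nonneg i

lemma det_one_add {A : Matrix n n ℝ} (hA : A.IsHermitian) :
    (1 + A).det = ∏ i, (1 + hA.eigenvalues i) := by
  have hU := Matrix.mem_unitaryGroup_iff.mp (hA.eigenvectorUnitary).2
  conv_lhs => rw [hA.spectral_theorem, Unitary.conjStarAlgAut_apply]
  have e : (1 : Matrix n n ℝ) + (hA.eigenvectorUnitary : Matrix n n ℝ) *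
        Matrix.diagonal (RCLike.ofReal ∘ hA.eigenvalues) * star (hA.eigenvectorUnitary : Matrix n n ℝ)
      = (hA.eigenvectorUnitary : Matrix n n ℝ) * (1 + Matrix.diagonal (RCLike.ofReal ∘ hA.eigenvalues)) *
        star (hA.eigenvectorUnitary : Matrix n n ℝ) := by
    rw [mul_add, mul_one, add_mul, hU]
  rw [e, Matrix.det_mul_right_comm, hU, one_mul]
  have e2 : (1 : Matrix n n ℝ) + Matrix.diagonal (RCLike.ofReal ∘ hA.eigenvalues)
      = Matrix.diagonal (fun i => 1 + hA.eigenvalues i) := by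
    ext i j
    by_cases hij : i = j <;>
      simp [hij, Matrix.one_apply, Matrix.diagonal_apply]
  rw [e2, Matrix.det_diagonal]

lemma det_eq_prod' {A : Matrix n n ℝ} (hA : A.IsHermitian) :
    A.det = ∏ i, hA.eigenvalues i := by
  simpa using hA.det_eq_prod_eigenvalues

lemma one_le_det_one_add {A : Matrix n n ℝ} (hA : A.PosSemidef) :
    1 ≤ (1 + A).det := by
  rw [det_one_add hA.1]
  calc (1:ℝ) = ∏ _i : n, (1:ℝ) := by simp
  _ ≤ ∏ i, (1 + hA.1.eigenvalues i) :=
      Finset.prod_le_prod (fun i _ => zero_le_one)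
        (fun i _ => by linarith [hA.eigenvalues_nonneg i])

lemma det_le_det_one_add {A : Matrix n n ℝ} (hA : A.PosSemidef) :
    A.det ≤ (1 + A).det := by
  rw [det_one_add hA.1, det_eq_prod' hA.1]
  exact Finset.prod_le_prod (fun i _ => hA.eigenvalues_nonneg i) (fun i _ => by linarith)

lemma det_le_trace_pow {m : ℕ} (hm : 0 < m) {A : Matrix (Fin m) (Fin m) ℝ}
    (hA : A.PosSemidef) : A.det ≤ (A.trace / m) ^ m := by
  have hmR : (0:ℝ) < m := by exact_mod_cast hm
  have hnn : ∀ i, 0 ≤ hA.1.eigenvalues i := hA.eigenvalues_nonneg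
  have key : ∏ i, (hA.1.eigenvalues i) ^ ((m:ℝ)⁻¹) ≤ ∑ i, (m:ℝ)⁻¹ * hA.1.eigenvalues i :=
    Real.geom_mean_le_arith_mean_weighted Finset.univ _ _ (fun _ _ => by positivity)
      (by simp; field_simp) (fun i _ => hnn i)
  have h2 : ∑ i, (m:ℝ)⁻¹ * hA.1.eigenvalues i = A.trace / m := by
    rw [trace_eq_sum hA.1, ← Finset.mul_sum]
    ring
  have h3 : 0 ≤ ∏ i, (hA.1.eigenvalues i) ^ ((m:ℝ)⁻¹) :=
    Finset.prod_nonneg fun i _ => Real.rpow_nonneg (hnn i) _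
  have h4 := pow_le_pow_left₀ h3 (key.trans_eq h2) m
  have h5 : (∏ i, (hA.1.eigenvalues i) ^ ((m:ℝ)⁻¹)) ^ m = ∏ i, hA.1.eigenvalues i := by
    rw [← Finset.prod_pow]
    refine Finset.prod_congr rfl fun i _ => ?_
    rw [← Real.rpow_natCast ((hA.1.eigenvalues i) ^ ((m:ℝ)⁻¹)) m, ← Real.rpow_mul (hnn i),
      inv_mul_cancel₀ (by exact_mod_cast hm.ne'), Real.rpow_one]
  rw [det_eq_prod' hA.1, ← h5]
  exact h4

end MimoAux


/-- The Gaussian MIMO capacity `C(H, P)`: the supremum of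
`(1/2) · log det (I + H * K * Hᵀ)` over all positive-semidefinite input
covariance matrices `K` with `trace K ≤ P`. -/
noncomputable def mimoCapacity (M N : ℕ) (H : Matrix (Fin M) (Fin N) ℝ) (P : ℝ) : ℝ :=
  sSup {r : ℝ | ∃ K : Matrix (Fin N) (Fin N) ℝ, K.PosSemidef ∧ K.trace ≤ P ∧
    r = (1 / 2 : ℝ) * Real.log ((1 + H * K * Hᵀ).det)}

set_option maxHeartbeats 1600000 in
/-- **High-SNR behavior of the MIMO capacity; Lemma 1.**
For a proper matrix `H` (i.e. `M ≤ N`, rank `M`, `det (H * Hᵀ) = 1`),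
`C(H, P) − (M/2) · log (P/M) → 0` as `P → ∞`. -/
theorem mimoCapacity_high_snr
    (M N : ℕ) (h : M ≤ N) (H : Matrix (Fin M) (Fin N) ℝ)
    (hrank : H.rank = M) (hdet : (H * Hᵀ).det = 1) :
    Filter.Tendsto
      (fun P : ℝ => mimoCapacity M N H P - (M / 2 : ℝ) * Real.log (P / M))
      Filter.atTop (nhds 0) := by
  classical
  rcases Nat.eq_zero_or_pos M with hM0 | hM
  · subst hM0
    have heq : (fun _ : ℝ => (0:ℝ)) =ᶠ[Filter.atTop]
        (fun P : ℝ => mimoCapacity 0 N H P - ((0:ℕ) / 2 : ℝ) * Real.log (P / (0:ℕ))) := by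
      filter_upwards [Filter.eventually_ge_atTop (0:ℝ)] with P hP
      have hset : {r : ℝ | ∃ K : Matrix (Fin N) (Fin N) ℝ, K.PosSemidef ∧ K.trace ≤ P ∧
          r = (1 / 2 : ℝ) * Real.log ((1 + H * K * Hᵀ).det)} = {(0:ℝ)} := by
        ext r
        constructor
        · rintro ⟨K, -, -, rfl⟩
          simp [Matrix.det_isEmpty]
        · rintro rfl
          exact ⟨0, Matrix.PosSemidef.zero, by simpa using hP, by simp [Matrix.det_isEmpty]⟩
      have : mimoCapacity 0 N H P = 0 := by
        rw [mimoCapacity, hset, csSup_singleton]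
      rw [this]
      simp
    exact Filter.Tendsto.congr' heq tendsto_const_nhds
  · -- main case 0 < M
    have hMR : (0:ℝ) < (M:ℝ) := by exact_mod_cast hM
    set G := H * Hᵀ with hGdef
    have hGpsd : G.PosSemidef := by
      simpa [Matrix.conjTranspose_eq_transpose_of_trivial] using
        Matrix.posSemidef_self_mul_conjTranspose H
    have hGdetU : IsUnit G.det := by rw [hdet]; exact isUnit_one
    have hGU : IsUnit G := (Matrix.isUnit_iff_isUnit_det G).mpr hGdetU
    have hGB : G * G⁻¹ = 1 := Matrix.mul_nonsing_inv G hGdetU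
    have hBG : G⁻¹ * G = 1 := Matrix.nonsing_inv_mul G hGdetU
    have hGpd : G.PosDef := by
      exact hGpsd.posDef_iff_isUnit.mpr hGU
    have hBpd : (G⁻¹).PosDef := hGpd.inv
    have hBpsd : (G⁻¹).PosSemidef := hBpd.posSemidef
    have hBherm : (G⁻¹)ᵀ = G⁻¹ := by
      have := hBpd.isHermitian.eq
      rwa [Matrix.conjTranspose_eq_transpose_of_trivial] at this
    have hBdet : (G⁻¹).det = 1 := by
      rw [Matrix.det_nonsing_inv, hdet]; simp
    set c := (G⁻¹).trace with hc_def
    have hc0 : 0 ≤ c := MimoAux.trace_nonneg' hBpsd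
    -- square root of G⁻¹
    open scoped MatrixOrder in
    set S := (CFC.sqrt G⁻¹ : Matrix (Fin M) (Fin M) ℝ) with hSdef
    open scoped MatrixOrder in
    have hSpsd : S.PosSemidef := Matrix.nonneg_iff_posSemidef.mp (CFC.sqrt_nonneg _)
    open scoped MatrixOrder in
    have hSS : S * S = G⁻¹ := CFC.sqrt_mul_sqrt_self _ (Matrix.nonneg_iff_posSemidef.mpr hBpsd)
    have hSdet : S.det * S.det = 1 := by rw [← Matrix.det_mul, hSS, hBdet]
    have hSherm : Sᴴ = S := hSpsd.1.eq
    -- the projection Q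
    set Q := Hᵀ * G⁻¹ * H with hQdef
    have hQpsd : Q.PosSemidef := by
      simpa [Matrix.conjTranspose_eq_transpose_of_trivial] using
        hBpsd.conjTranspose_mul_mul_same H
    have hQtr : Q.trace = (M:ℝ) := by
      calc Q.trace = (H * (Hᵀ * G⁻¹)).trace := Matrix.trace_mul_comm _ _
        _ = (G * G⁻¹).trace := by rw [hGdef]; simp only [Matrix.mul_assoc]
        _ = (1 : Matrix (Fin M) (Fin M) ℝ).trace := by rw [hGB]
        _ = (M:ℝ) := by simp [Matrix.trace_one]
    have hQQ : Q * Q = Q := by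
      have e : Q * Q = Hᵀ * (G⁻¹ * G) * (G⁻¹ * H) := by
        rw [hQdef, hGdef]; simp only [Matrix.mul_assoc]
      rw [e, hBG, Matrix.mul_one, hQdef, Matrix.mul_assoc]
    have hQsymm : Qᵀ = Q := by
      rw [hQdef, Matrix.transpose_mul, Matrix.transpose_mul, Matrix.transpose_transpose,
        hBherm, ← Matrix.mul_assoc]
    clear_value S c
    -- trace identities
    have trace_SAS : ∀ K : Matrix (Fin N) (Fin N) ℝ,
        (S * (H * K * Hᵀ) * S).trace = (K * Q).trace := by
      intro K
      calc (S * (H * K * Hᵀ) * S).trace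
          = (S * (S * (H * K * Hᵀ))).trace := Matrix.trace_mul_comm _ _
        _ = ((S * S) * (H * K * Hᵀ)).trace := by simp only [Matrix.mul_assoc]
        _ = ((H * K * Hᵀ) * G⁻¹).trace := by rw [hSS, Matrix.trace_mul_comm]
        _ = (H * (K * (Hᵀ * G⁻¹))).trace := by simp only [Matrix.mul_assoc]
        _ = ((K * (Hᵀ * G⁻¹)) * H).trace := Matrix.trace_mul_comm _ _
        _ = (K * Q).trace := by rw [hQdef]; simp only [Matrix.mul_assoc]
    have traceKQ_le : ∀ K : Matrix (Fin N) (Fin N) ℝ, K.PosSemidef →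
        (K * Q).trace ≤ K.trace := by
      intro K hK
      have h1 : (1 - Q)ᴴ = 1 - Q := by
        rw [Matrix.conjTranspose_eq_transpose_of_trivial, Matrix.transpose_sub,
          Matrix.transpose_one, hQsymm]
      have hproj : ((1 - Q) * K * (1 - Q)).PosSemidef := by
        have := hK.mul_mul_conjTranspose_same (1 - Q)
        rwa [h1] at this
      have e2 : (1 - Q) * (1 - Q) = 1 - Q := by
        rw [sub_mul, one_mul, mul_sub, mul_one, hQQ, sub_self, sub_zero]
      have e1 : ((1 - Q) * K * (1 - Q)).trace = K.trace - (K * Q).trace := by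
        calc ((1 - Q) * K * (1 - Q)).trace
            = ((1 - Q) * ((1 - Q) * K)).trace := Matrix.trace_mul_comm _ _
          _ = (((1 - Q) * (1 - Q)) * K).trace := by rw [Matrix.mul_assoc]
          _ = (K * (1 - Q)).trace := by rw [e2, Matrix.trace_mul_comm]
          _ = K.trace - (K * Q).trace := by
              rw [Matrix.mul_sub, Matrix.mul_one, Matrix.trace_sub]
      have := MimoAux.trace_nonneg' hproj
      linarith [e1 ▸ this]
    -- the admissible set
    have hcap : ∀ P : ℝ, mimoCapacity M N H P =
        sSup {r : ℝ | ∃ K : Matrix (Fin N) (Fin N) ℝ, K.PosSemidef ∧ K.trace ≤ P ∧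
          r = (1 / 2 : ℝ) * Real.log ((1 + H * K * Hᵀ).det)} := fun _ => rfl
    -- upper bound for every element of the set
    have upper : ∀ P : ℝ, 0 ≤ P →
        ∀ r ∈ {r : ℝ | ∃ K : Matrix (Fin N) (Fin N) ℝ, K.PosSemidef ∧ K.trace ≤ P ∧
          r = (1 / 2 : ℝ) * Real.log ((1 + H * K * Hᵀ).det)},
        r ≤ ((M:ℝ) / 2) * Real.log ((c + P) / M) := by
      rintro P hP r ⟨K, hK, hKtr, rfl⟩
      have hApsd : (H * K * Hᵀ).PosSemidef := by
        simpa [Matrix.conjTranspose_eq_transpose_of_trivial] using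
          hK.mul_mul_conjTranspose_same H
      have hL : (S * (H * K * Hᵀ) * S).PosSemidef := by
        have := hApsd.mul_mul_conjTranspose_same S
        rwa [hSherm] at this
      have hdet1 : (1 + H * K * Hᵀ).det = (G⁻¹ + S * (H * K * Hᵀ) * S).det := by
        have e : G⁻¹ + S * (H * K * Hᵀ) * S = S * (1 + H * K * Hᵀ) * S := by
          rw [mul_add, mul_one, add_mul, hSS]
        have e2 : (G⁻¹ + S * (H * K * Hᵀ) * S).det = (1 + H * K * Hᵀ).det := by
          rw [e, Matrix.det_mul, Matrix.det_mul]
          calc S.det * (1 + H * K * Hᵀ).det * S.det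
              = (S.det * S.det) * (1 + H * K * Hᵀ).det := by ring
            _ = (1 + H * K * Hᵀ).det := by rw [hSdet, one_mul]
        exact e2.symm
      have hBL : (G⁻¹ + S * (H * K * Hᵀ) * S).PosSemidef := MimoAux.psd_add hBpsd hL
      have htr : (G⁻¹ + S * (H * K * Hᵀ) * S).trace ≤ c + P := by
        rw [Matrix.trace_add]
        have h1 := trace_SAS K
        have h2 := traceKQ_le K hK
        linarith
      have hdet_le : (1 + H * K * Hᵀ).det ≤ ((c + P) / M) ^ M := by
        rw [hdet1]
        refine (MimoAux.det_le_trace_pow hM hBL).trans ?_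
        have h1 : (G⁻¹ + S * (H * K * Hᵀ) * S).trace / M ≤ (c + P) / M :=
          (div_le_div_iff_of_pos_right hMR).mpr htr
        exact pow_le_pow_left₀
          (div_nonneg (MimoAux.trace_nonneg' hBL) hMR.le) h1 M
      have hdet_pos1 : 1 ≤ (1 + H * K * Hᵀ).det := MimoAux.one_le_det_one_add hApsd
      have hlog : Real.log ((1 + H * K * Hᵀ).det) ≤ (M:ℝ) * Real.log ((c + P) / M) := by
        calc Real.log ((1 + H * K * Hᵀ).det)
            ≤ Real.log (((c + P) / M) ^ M) :=
              Real.log_le_log (by linarith) hdet_le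
          _ = (M:ℝ) * Real.log ((c + P) / M) := by rw [Real.log_pow]
      calc (1 / 2 : ℝ) * Real.log ((1 + H * K * Hᵀ).det)
          ≤ (1 / 2 : ℝ) * ((M:ℝ) * Real.log ((c + P) / M)) := by
            nlinarith [hlog]
        _ = ((M:ℝ) / 2) * Real.log ((c + P) / M) := by ring
    -- nonemptiness and boundedness
    have hmem0 : ∀ P : ℝ, 0 ≤ P →
        (0:ℝ) ∈ {r : ℝ | ∃ K : Matrix (Fin N) (Fin N) ℝ, K.PosSemidef ∧ K.trace ≤ P ∧
          r = (1 / 2 : ℝ) * Real.log ((1 + H * K * Hᵀ).det)} := by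
      intro P hP
      exact ⟨0, Matrix.PosSemidef.zero, by simpa using hP, by simp⟩
    have hbdd : ∀ P : ℝ, 0 ≤ P →
        BddAbove {r : ℝ | ∃ K : Matrix (Fin N) (Fin N) ℝ, K.PosSemidef ∧ K.trace ≤ P ∧
          r = (1 / 2 : ℝ) * Real.log ((1 + H * K * Hᵀ).det)} := by
      intro P hP
      exact ⟨((M:ℝ) / 2) * Real.log ((c + P) / M), fun r hr => upper P hP r hr⟩
    -- lower bound
    have lower : ∀ P : ℝ, 0 < P →
        ((M:ℝ) / 2) * Real.log (P / M) ≤ mimoCapacity M N H P := by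
      intro P hP0
      have hPM : (0:ℝ) < P / M := div_pos hP0 hMR
      have hK0psd : ((P / M) • Q).PosSemidef := MimoAux.psd_smul hQpsd hPM.le
      have hK0tr : ((P / M) • Q).trace ≤ P := by
        rw [Matrix.trace_smul, hQtr]
        simp only [smul_eq_mul]
        rw [div_mul_cancel₀ _ hMR.ne']
      have hHKH : H * ((P / M) • Q) * Hᵀ = (P / M) • G := by
        rw [Matrix.mul_smul, Matrix.smul_mul]
        congr 1
        have e : H * Q * Hᵀ = G * (G⁻¹ * G) := by
          rw [hQdef, hGdef]; simp only [Matrix.mul_assoc]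
        rw [e, hBG, mul_one]
      have hmem : (1 / 2 : ℝ) * Real.log ((1 + (P / M) • G).det) ∈
          {r : ℝ | ∃ K : Matrix (Fin N) (Fin N) ℝ, K.PosSemidef ∧ K.trace ≤ P ∧
            r = (1 / 2 : ℝ) * Real.log ((1 + H * K * Hᵀ).det)} :=
        ⟨(P / M) • Q, hK0psd, hK0tr, by rw [hHKH]⟩
      have hdetg : ((P / M) • G).det = (P / M) ^ M := by
        rw [Matrix.det_smul, hdet, mul_one, Fintype.card_fin]
      have hge : ((M:ℝ) / 2) * Real.log (P / M)
          ≤ (1 / 2 : ℝ) * Real.log ((1 + (P / M) • G).det) := by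
        have hsmul : ((P / M) • G).PosSemidef := MimoAux.psd_smul hGpsd hPM.le
        have h1 : (P / M) ^ M ≤ (1 + (P / M) • G).det := by
          rw [← hdetg]; exact MimoAux.det_le_det_one_add hsmul
        have h2 : Real.log ((P / M) ^ M) ≤ Real.log ((1 + (P / M) • G).det) :=
          Real.log_le_log (pow_pos hPM M) h1
        rw [Real.log_pow] at h2
        nlinarith [h2]
      calc ((M:ℝ) / 2) * Real.log (P / M)
          ≤ (1 / 2 : ℝ) * Real.log ((1 + (P / M) • G).det) := hge
        _ ≤ mimoCapacity M N H P := by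
            rw [hcap P]
            exact le_csSup (hbdd P hP0.le) hmem
    -- the squeezing function
    have hgtend : Filter.Tendsto (fun P : ℝ => ((M:ℝ) / 2) * Real.log (1 + c / P))
        Filter.atTop (nhds 0) := by
      have hc' : Filter.Tendsto (fun P : ℝ => c / P) Filter.atTop (nhds 0) :=
        Filter.Tendsto.div_atTop tendsto_const_nhds Filter.tendsto_id
      have h1 : Filter.Tendsto (fun P : ℝ => 1 + c / P) Filter.atTop (nhds 1) := by
        simpa using tendsto_const_nhds.add hc'
      have h2 : Filter.Tendsto (fun P : ℝ => Real.log (1 + c / P))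
          Filter.atTop (nhds 0) := by
        have := (Real.continuousAt_log (by norm_num : (1:ℝ) ≠ 0)).tendsto.comp h1
        simpa [Function.comp_def] using this
      simpa using h2.const_mul ((M:ℝ) / 2)
    refine tendsto_of_tendsto_of_tendsto_of_le_of_le'
      (tendsto_const_nhds (α := ℝ)) hgtend ?_ ?_
    · filter_upwards [Filter.eventually_gt_atTop (0:ℝ)] with P hP0
      have := lower P hP0
      linarith
    · filter_upwards [Filter.eventually_gt_atTop (0:ℝ)] with P hP0
      have hup : mimoCapacity M N H P ≤ ((M:ℝ) / 2) * Real.log ((c + P) / M) := by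
        rw [hcap P]
        exact csSup_le ⟨0, hmem0 P hP0.le⟩ (fun r hr => upper P hP0.le r hr)
      have hcP : (0:ℝ) < c + P := by linarith
      have hlogeq : Real.log ((c + P) / M) - Real.log (P / M) = Real.log (1 + c / P) := by
        have e : 1 + c / P = (c + P) / P := by
          rw [add_div, div_self hP0.ne', add_comm]
        rw [e, Real.log_div hcP.ne' hP0.ne', Real.log_div hcP.ne' hMR.ne',
          Real.log_div hP0.ne' hMR.ne']
        ring
      calc mimoCapacity M N H P - ((M:ℝ) / 2) * Real.log (P / M)
          ≤ ((M:ℝ) / 2) * Real.log ((c + P) / M) - ((M:ℝ) / 2) * Real.log (P / M) := by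
            linarith
        _ = ((M:ℝ) / 2) * (Real.log ((c + P) / M) - Real.log (P / M)) := by ring
        _ = ((M:ℝ) / 2) * Real.log (1 + c / P) := by rw [hlogeq]
end

section
/- (PNC rate is within half a bit of the cut-set bound) For all real P ≥ 0 and C ≥ 0, min( (1/2) · log₂(1 + P), C ) − min( max(0, (1/2) · log₂(1/2 + P)), C ) ≤ 1/2. -/
/-- **PNC rate is within half a bit of the cut-set bound.**
For all `P ≥ 0` and `C ≥ 0`,
`min((1/2)·log₂(1+P), C) − min([(1/2)·log₂(1/2+P)]⁺, C) ≤ 1/2`. -/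
theorem pnc_within_half_bit_of_cutset (P C : ℝ) (hP : 0 ≤ P) (hC : 0 ≤ C) :
    min ((1 / 2 : ℝ) * Real.logb 2 (1 + P)) C
      - min (max 0 ((1 / 2 : ℝ) * Real.logb 2 (1 / 2 + P))) C ≤ 1 / 2 := by
  have key : (1 / 2 : ℝ) * Real.logb 2 (1 + P)
      ≤ max 0 ((1 / 2 : ℝ) * Real.logb 2 (1 / 2 + P)) + 1 / 2 := by
    have h1 : Real.logb 2 (1 + P) ≤ Real.logb 2 (2 * (1 / 2 + P)) := by
      gcongr <;> [norm_num; linarith]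
    have h2 : Real.logb 2 (2 * (1 / 2 + P)) = 1 + Real.logb 2 (1 / 2 + P) := by
      rw [Real.logb_mul (by norm_num) (by linarith), Real.logb_self_eq_one] <;> norm_num
    have h3 : (1 / 2 : ℝ) * Real.logb 2 (1 / 2 + P)
        ≤ max 0 ((1 / 2 : ℝ) * Real.logb 2 (1 / 2 + P)) := le_max_right _ _
    nlinarith
  have : min ((1 / 2 : ℝ) * Real.logb 2 (1 + P)) C
      ≤ min (max 0 ((1 / 2 : ℝ) * Real.logb 2 (1 / 2 + P))) C + 1 / 2 := by
    rcases le_total (max 0 ((1 / 2 : ℝ) * Real.logb 2 (1 / 2 + P))) C with h' | h'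
    · rw [min_eq_left h']; exact le_trans (min_le_left _ _) key
    · rw [min_eq_right h']; exact le_trans (min_le_right _ _) (by linarith)
  linarith
end
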